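/- arXiv:2208.10927 — 4 statements merged into one kernel-verified Lean document; each statement's English description precedes it below -/
import Mathlib

section
/- Let T > 0, τ > 0, f_max > 0, a > 0, c₃ > 0, c₄ > 0, d > 0, s_max > 0, E_F0 ≥ 0, E_G0 ≥ 0. Let s : [0,T] → ℝ be measurable with 0 ≤ s(t) ≤ s_max a.e., and let glyc : ℝ → ℝ be continuous with 0 ≤ glyc(v) ≤ 1 for all v. Then the admissible set A = { f : [0,T] → ℝ measurable | 0 ≤ f(t) ≤ f_max a.e., and E_F[f](t) ≥ 0 and E_G[f](t) ≥ 0 for all t ∈ [0,T] } contains a control f* that maximizes the distance functional: ∫₀^T V[f*](t) dt = sup_{f ∈ A} ∫₀^T V[f](t) dt. (Existence of an optimal propulsion force for the maximum–distance runner problem.) -/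
open MeasureTheory Real Set

/-- The velocity of the runner: solution of `V' = f - V/τ`, `V 0 = 0`. -/
noncomputable def runnerV (τ : ℝ) (f : ℝ → ℝ) (t : ℝ) : ℝ :=
  ∫ u in (0:ℝ)..t, Real.exp (-(t - u) / τ) * f u

/-- The nutrition compartment: solution of `N' = s - d N - c₄ N`, `N 0 = 0`. -/
noncomputable def runnerN (d c₄ : ℝ) (s : ℝ → ℝ) (t : ℝ) : ℝ :=
  ∫ u in (0:ℝ)..t, Real.exp (-(d + c₄) * (t - u)) * s u

/-- The fat energy of the runner. -/
noncomputable def runnerEF (τ a EF0 : ℝ) (glyc : ℝ → ℝ) (f : ℝ → ℝ) (t : ℝ) : ℝ :=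
  EF0 - a * ∫ u in (0:ℝ)..t, f u * runnerV τ f u * (1 - glyc (runnerV τ f u))

/-- The glycogen energy of the runner. -/
noncomputable def runnerEG (τ a c₃ c₄ d EG0 : ℝ) (glyc s f : ℝ → ℝ) (t : ℝ) : ℝ :=
  EG0 + ∫ u in (0:ℝ)..t,
    (c₃ * c₄ * runnerN d c₄ s u - a * f u * runnerV τ f u * glyc (runnerV τ f u))

/-- The admissible control set: measurable propulsion forces respecting the control
bounds a.e. on `[0,T]` whose fat and glycogen energies stay nonnegative on `[0,T]`. -/
def admissible (T τ fmax a c₃ c₄ d EF0 EG0 : ℝ) (glyc s : ℝ → ℝ) : Set (ℝ → ℝ) :=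
  {f : ℝ → ℝ | Measurable f ∧
    (∀ᵐ t ∂(volume.restrict (Icc (0:ℝ) T)), 0 ≤ f t ∧ f t ≤ fmax) ∧
    (∀ t ∈ Icc (0:ℝ) T, 0 ≤ runnerEF τ a EF0 glyc f t) ∧
    (∀ t ∈ Icc (0:ℝ) T, 0 ≤ runnerEG τ a c₃ c₄ d EG0 glyc s f t)}

section Auxiliary

open Filter Topology intervalIntegral
open scoped NNReal ENNReal

lemma auxIntegrableOn {f : ℝ → ℝ} {a b C : ℝ}
    (hf : AEStronglyMeasurable f (volume.restrict (Ioc a b)))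
    (h : ∀ x ∈ Ioc a b, |f x| ≤ C) : IntegrableOn f (Ioc a b) := by
  refine Integrable.mono' (integrable_const C) hf ?_
  exact (ae_restrict_iff' measurableSet_Ioc).2 (ae_of_all _ h)

lemma auxII {f : ℝ → ℝ} {C : ℝ} (hf : Measurable f)
    (h : ∀ x, |f x| ≤ C) (a b : ℝ) : IntervalIntegrable f volume a b := by
  rw [intervalIntegrable_iff]
  exact auxIntegrableOn hf.aestronglyMeasurable (fun x _ => h x)

lemma auxIImul {ψ f : ℝ → ℝ} {C : ℝ} (hψ : Continuous ψ) (hf : Measurable f)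
    (h : ∀ x, |f x| ≤ C) (a b : ℝ) :
    IntervalIntegrable (fun u => ψ u * f u) volume a b := by
  obtain ⟨K, hK⟩ := (isCompact_uIcc (a := a) (b := b)).exists_bound_of_continuousOn
    hψ.continuousOn
  rw [intervalIntegrable_iff]
  refine auxIntegrableOn ((hψ.measurable.mul hf).aestronglyMeasurable) (C := K * C) ?_
  intro x hx
  have hx' : x ∈ uIcc a b := ⟨hx.1.le, hx.2⟩
  calc |ψ x * f x| = |ψ x| * |f x| := abs_mul _ _
    _ ≤ K * C := by
        apply mul_le_mul (hK x hx') (h x) (abs_nonneg _)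
        exact le_trans (abs_nonneg _) (hK x hx')

lemma abs_le_of_Icc {M : ℝ} {f : ℝ → ℝ} (hb : ∀ x, f x ∈ Icc 0 M) (x : ℝ) : |f x| ≤ M := by
  rw [abs_of_nonneg (hb x).1]; exact (hb x).2

lemma runnerV_nonneg (τ : ℝ) {f : ℝ → ℝ} (hf : ∀ x, 0 ≤ f x) {t : ℝ} (ht : 0 ≤ t) :
    0 ≤ runnerV τ f t :=
  intervalIntegral.integral_nonneg ht (fun u _ => mul_nonneg (exp_pos _).le (hf u))

lemma runnerV_le {τ M : ℝ} (hτ : 0 < τ) {f : ℝ → ℝ} (hb : ∀ x, f x ∈ Icc 0 M)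
    {t : ℝ} (ht : 0 ≤ t) : runnerV τ f t ≤ M * t := by
  have h0M : 0 ≤ M := le_trans (hb 0).1 (hb 0).2
  have := intervalIntegral.norm_integral_le_of_norm_le_const
    (a := 0) (b := t) (C := M) (f := fun u => Real.exp (-(t - u) / τ) * f u) ?_
  · calc runnerV τ f t ≤ |runnerV τ f t| := le_abs_self _
      _ ≤ M * |t - 0| := this
      _ = M * t := by rw [sub_zero, abs_of_nonneg ht]
  · intro x hx
    rw [uIoc_of_le ht] at hx
    have hexp : Real.exp (-(t - x) / τ) ≤ 1 := by
      rw [← Real.exp_zero]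
      apply Real.exp_le_exp.2
      apply div_nonpos_of_nonpos_of_nonneg (by linarith [hx.2]) hτ.le
    rw [Real.norm_eq_abs, abs_mul, abs_of_nonneg (Real.exp_pos _).le,
      abs_of_nonneg (hb x).1]
    calc Real.exp (-(t - x) / τ) * f x ≤ 1 * M :=
        mul_le_mul hexp (hb x).2 (hb x).1 zero_le_one
      _ = M := one_mul M

lemma runnerV_eq (τ : ℝ) (f : ℝ → ℝ) (t : ℝ) :
    runnerV τ f t = Real.exp (-t / τ) * ∫ u in (0:ℝ)..t, Real.exp (u / τ) * f u := by
  rw [← intervalIntegral.integral_const_mul]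
  apply intervalIntegral.integral_congr
  intro x _
  show Real.exp (-(t - x) / τ) * f x = Real.exp (-t / τ) * (Real.exp (x / τ) * f x)
  rw [← mul_assoc, ← Real.exp_add]
  ring_nf

lemma runnerV_continuous {τ M : ℝ} {f : ℝ → ℝ} (hf : Measurable f)
    (hb : ∀ x, f x ∈ Icc 0 M) : Continuous (runnerV τ f) := by
  have h1 : Continuous fun t => ∫ u in (0:ℝ)..t, Real.exp (u / τ) * f u := by
    apply intervalIntegral.continuous_primitive
    intro a b
    exact auxIImul (Real.continuous_exp.comp (continuous_id.div_const τ)) hf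
      (abs_le_of_Icc hb) a b
  have h2 : Continuous fun t : ℝ => Real.exp (-t / τ) :=
    Real.continuous_exp.comp ((continuous_neg).div_const τ)
  have : (runnerV τ f) = fun t => Real.exp (-t / τ) * ∫ u in (0:ℝ)..t, Real.exp (u / τ) * f u :=
    funext (runnerV_eq τ f)
  rw [this]
  exact h2.mul h1

lemma runnerV_mem {τ M T : ℝ} (hτ : 0 < τ) (hM : 0 ≤ M) {f : ℝ → ℝ}
    (hb : ∀ x, f x ∈ Icc 0 M) {u : ℝ} (hu : u ∈ Icc (0:ℝ) T) :
    runnerV τ f u ∈ Icc 0 (M * T) :=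
  ⟨runnerV_nonneg τ (fun x => (hb x).1) hu.1,
    (runnerV_le hτ hb hu.1).trans (mul_le_mul_of_nonneg_left hu.2 hM)⟩

/-- clamp a function into `[0, M]`. -/
def clamp (M : ℝ) (f : ℝ → ℝ) (x : ℝ) : ℝ := max 0 (min (f x) M)

lemma clamp_mem_Icc {M : ℝ} (hM : 0 ≤ M) (f : ℝ → ℝ) (x : ℝ) : clamp M f x ∈ Icc 0 M :=
  ⟨le_max_left _ _, max_le hM (min_le_right _ _)⟩

lemma clamp_meas {M : ℝ} {f : ℝ → ℝ} (hf : Measurable f) : Measurable (clamp M f) :=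
  measurable_const.max (hf.min measurable_const)

lemma clamp_eq {M : ℝ} {f : ℝ → ℝ} {x : ℝ} (h1 : 0 ≤ f x) (h2 : f x ≤ M) :
    clamp M f x = f x := by
  unfold clamp; rw [min_eq_left h2, max_eq_right h1]

lemma ae_restrict_sub {T t : ℝ} {f g : ℝ → ℝ}
    (h : f =ᵐ[volume.restrict (Icc 0 T)] g) (ht : t ∈ Icc (0:ℝ) T) :
    f =ᵐ[volume.restrict (Ioc 0 t)] g :=
  ae_mono (Measure.restrict_mono
    (by intro x hx; exact mem_Icc.2 ⟨hx.1.le, hx.2.trans ht.2⟩) le_rfl) h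

lemma integral_congr_ae' {t : ℝ} (ht : 0 ≤ t) {F G : ℝ → ℝ}
    (h : F =ᵐ[volume.restrict (Ioc 0 t)] G) :
    ∫ u in (0:ℝ)..t, F u = ∫ u in (0:ℝ)..t, G u := by
  rw [intervalIntegral.integral_of_le ht, intervalIntegral.integral_of_le ht]
  exact integral_congr_ae h

lemma runnerV_congr_ae {τ T : ℝ} {f g : ℝ → ℝ}
    (h : f =ᵐ[volume.restrict (Icc 0 T)] g) {t : ℝ} (ht : t ∈ Icc (0:ℝ) T) :
    runnerV τ f t = runnerV τ g t := by
  apply integral_congr_ae' ht.1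
  filter_upwards [ae_restrict_sub h ht] with x hx
  rw [hx]

lemma runnerEF_congr_ae {τ a EF0 T : ℝ} {glyc f g : ℝ → ℝ}
    (h : f =ᵐ[volume.restrict (Icc 0 T)] g) {t : ℝ} (ht : t ∈ Icc (0:ℝ) T) :
    runnerEF τ a EF0 glyc f t = runnerEF τ a EF0 glyc g t := by
  unfold runnerEF
  congr 1
  congr 1
  apply integral_congr_ae' ht.1
  filter_upwards [ae_restrict_sub h ht, ae_restrict_mem (μ := volume)
    (s := Ioc (0:ℝ) t) measurableSet_Ioc] with x hx hmem
  have hV : runnerV τ f x = runnerV τ g x :=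
    runnerV_congr_ae h ⟨hmem.1.le, hmem.2.trans ht.2⟩
  rw [hx, hV]

lemma runnerEG_congr_ae {τ a c₃ c₄ d EG0 T : ℝ} {glyc s f g : ℝ → ℝ}
    (h : f =ᵐ[volume.restrict (Icc 0 T)] g) {t : ℝ} (ht : t ∈ Icc (0:ℝ) T) :
    runnerEG τ a c₃ c₄ d EG0 glyc s f t = runnerEG τ a c₃ c₄ d EG0 glyc s g t := by
  unfold runnerEG
  congr 1
  apply integral_congr_ae' ht.1
  filter_upwards [ae_restrict_sub h ht, ae_restrict_mem (μ := volume)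
    (s := Ioc (0:ℝ) t) measurableSet_Ioc] with x hx hmem
  have hV : runnerV τ f x = runnerV τ g x :=
    runnerV_congr_ae h ⟨hmem.1.le, hmem.2.trans ht.2⟩
  rw [hx, hV]

end Auxiliary

section Auxiliary2
open Filter Topology intervalIntegral
open scoped NNReal ENNReal

lemma weak_conv {M T : ℝ} (hM : 0 ≤ M) (f : ℕ → ℝ → ℝ) (g : ℝ → ℝ)
    (hfm : ∀ n, Measurable (f n)) (hfb : ∀ n x, f n x ∈ Icc 0 M)
    (hgm : Measurable g) (hgb : ∀ x, g x ∈ Icc 0 M)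
    (hG : ∀ x ∈ Icc (0:ℝ) T, Tendsto (fun n => ∫ u in (0:ℝ)..x, f n u) atTop
      (𝓝 (∫ u in (0:ℝ)..x, g u)))
    {ψ : ℝ → ℝ} (hψ : Continuous ψ) {t : ℝ} (ht : t ∈ Icc (0:ℝ) T) :
    Tendsto (fun n => ∫ u in (0:ℝ)..t, ψ u * f n u) atTop
      (𝓝 (∫ u in (0:ℝ)..t, ψ u * g u)) := by
  have hT : (0:ℝ) ≤ T := le_trans ht.1 ht.2
  rw [Metric.tendsto_atTop]
  intro ε hε
  -- uniform continuity of ψ on [0, T]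
  have huc := Metric.uniformContinuousOn_iff.1
    (isCompact_Icc.uniformContinuousOn_of_continuous (s := Icc (0:ℝ) T) hψ.continuousOn)
  set ε₁ : ℝ := ε / (4 * (M * T + 1)) with hε₁def
  have hMT1 : (0:ℝ) < M * T + 1 := by positivity
  have hε₁ : 0 < ε₁ := by positivity
  obtain ⟨δ, hδ, hδ'⟩ := huc ε₁ hε₁
  -- partition
  set k : ℕ := ⌈t / δ⌉₊ + 1 with hkdef
  have hk0 : 0 < (k:ℝ) := by positivity
  have htk : t / k < δ := by
    rw [div_lt_iff₀ hk0]
    have h1 : t / δ ≤ (⌈t / δ⌉₊ : ℝ) := Nat.le_ceil _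
    have h2 : t ≤ δ * ⌈t / δ⌉₊ := by
      rw [div_le_iff₀ hδ] at h1; linarith
    have : (k:ℝ) = (⌈t / δ⌉₊ : ℝ) + 1 := by push_cast [hkdef]; ring
    nlinarith
  set a : ℕ → ℝ := fun i => i * t / k with hadef
  have ha0 : a 0 = 0 := by simp [hadef]
  have hak : a k = t := by simp only [hadef]; field_simp
  have hmem : ∀ i : ℕ, i ≤ k → a i ∈ Icc (0:ℝ) T := by
    intro i hi
    constructor
    · apply div_nonneg (mul_nonneg (Nat.cast_nonneg i) ht.1) hk0.le
    · have : (i:ℝ) * t ≤ k * t := by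
        apply mul_le_mul_of_nonneg_right (Nat.cast_le.2 hi) ht.1
      calc (i:ℝ) * t / k ≤ (k:ℝ) * t / k := (div_le_div_iff_of_pos_right hk0).2 this
        _ = t := by field_simp
        _ ≤ T := ht.2
  have hstep : ∀ i : ℕ, a (i+1) - a i = t / k := by
    intro i; simp only [hadef]; push_cast; ring
  -- the Riemann-sum functional
  set S : (ℝ → ℝ) → ℝ := fun h => ∑ i ∈ Finset.range k,
    ψ (a i) * ((∫ u in (0:ℝ)..a (i+1), h u) - ∫ u in (0:ℝ)..a i, h u) with hSdef
  -- key approximation bound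
  have key : ∀ h : ℝ → ℝ, Measurable h → (∀ x, h x ∈ Icc 0 M) →
      |(∫ u in (0:ℝ)..t, ψ u * h u) - S h| ≤ ε₁ * (M * T) := by
    intro h hm hb
    have hint : ∀ (c e : ℝ), IntervalIntegrable (fun u => ψ u * h u) volume c e :=
      fun c e => auxIImul hψ hm (abs_le_of_Icc hb) c e
    have hinth : ∀ (c e : ℝ), IntervalIntegrable h volume c e :=
      fun c e => auxII hm (abs_le_of_Icc hb) c e
    have hsplit : (∫ u in (0:ℝ)..t, ψ u * h u)
        = ∑ i ∈ Finset.range k, ∫ u in a i..a (i+1), ψ u * h u := by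
      rw [← hak, ← ha0]
      exact (intervalIntegral.sum_integral_adjacent_intervals
        (fun i _ => hint (a i) (a (i+1)))).symm
    have hSalt : S h = ∑ i ∈ Finset.range k, ∫ u in a i..a (i+1), ψ (a i) * h u := by
      apply Finset.sum_congr rfl
      intro i _
      rw [intervalIntegral.integral_const_mul,
        intervalIntegral.integral_interval_sub_left (hinth 0 (a (i+1))) (hinth 0 (a i))]
    rw [hsplit, hSalt, ← Finset.sum_sub_distrib]
    calc |∑ i ∈ Finset.range k, ((∫ u in a i..a (i+1), ψ u * h u) -
            ∫ u in a i..a (i+1), ψ (a i) * h u)|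
        ≤ ∑ i ∈ Finset.range k, |(∫ u in a i..a (i+1), ψ u * h u) -
            ∫ u in a i..a (i+1), ψ (a i) * h u| := Finset.abs_sum_le_sum_abs _ _
      _ ≤ ∑ i ∈ Finset.range k, ε₁ * M * (t / k) := by
          apply Finset.sum_le_sum
          intro i hi
          rw [Finset.mem_range] at hi
          rw [← intervalIntegral.integral_sub (hint _ _) (auxIImul (continuous_const)
            hm (abs_le_of_Icc hb) _ _)]
          have hbd := intervalIntegral.norm_integral_le_of_norm_le_const
            (a := a i) (b := a (i+1)) (C := ε₁ * M)
            (f := fun u => ψ u * h u - ψ (a i) * h u) ?_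
          · rw [Real.norm_eq_abs] at hbd
            calc |∫ u in a i..a (i+1), (ψ u * h u - ψ (a i) * h u)| ≤
                ε₁ * M * |a (i+1) - a i| := hbd
              _ = ε₁ * M * (t / k) := by
                  rw [hstep i, abs_of_nonneg (div_nonneg ht.1 hk0.le)]
          · intro x hx
            rw [uIoc_of_le (by linarith [hstep i, div_nonneg ht.1 hk0.le] : a i ≤ a (i+1))] at hx
            have hxmem : x ∈ Icc (0:ℝ) T := by
              constructor
              · linarith [(hmem i (by omega)).1, hx.1]
              · linarith [(hmem (i+1) (by omega)).2, hx.2]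
            have hdist : dist x (a i) < δ := by
              rw [Real.dist_eq, abs_of_pos (by linarith [hx.1] : 0 < x - a i)]
              have h5 := hstep i
              linarith [hx.2, htk]
            have hψd := hδ' x hxmem (a i) (hmem i (by omega)) hdist
            rw [Real.dist_eq] at hψd
            show |ψ x * h x - ψ (a i) * h x| ≤ ε₁ * M
            rw [← sub_mul, abs_mul]
            exact mul_le_mul hψd.le (abs_le_of_Icc hb x) (abs_nonneg _) hε₁.le
      _ = (k:ℝ) * (ε₁ * M * (t / k)) := by
          rw [Finset.sum_const, Finset.card_range, nsmul_eq_mul]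
      _ = ε₁ * (M * t) := by field_simp
      _ ≤ ε₁ * (M * T) := by
          apply mul_le_mul_of_nonneg_left (mul_le_mul_of_nonneg_left ht.2 hM) hε₁.le
  -- convergence of the Riemann sums
  have hconv : Tendsto (fun n => S (f n)) atTop (𝓝 (S g)) := by
    apply tendsto_finset_sum
    intro i hi
    rw [Finset.mem_range] at hi
    exact (tendsto_const_nhds.mul (((hG (a (i+1)) (hmem (i+1) (by omega))).sub
      (hG (a i) (hmem i (by omega))))))
  have hev : ∀ᶠ n in atTop, |S (f n) - S g| < ε / 4 := by
    have := Metric.tendsto_atTop.1 hconv (ε / 4) (by positivity)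
    obtain ⟨N, hN⟩ := this
    exact eventually_atTop.2 ⟨N, fun n hn => by
      have := hN n hn; rwa [Real.dist_eq] at this⟩
  obtain ⟨N, hN⟩ := eventually_atTop.1 hev
  refine ⟨N, fun n hn => ?_⟩
  have h1 := key (f n) (hfm n) (hfb n)
  have h2 := key g hgm hgb
  have h3 := hN n hn
  have hε₁MT : ε₁ * (M * T) < ε / 4 := by
    rw [hε₁def, div_mul_eq_mul_div, div_lt_div_iff₀ (by positivity) (by norm_num : (0:ℝ) < 4)]
    nlinarith
  rw [Real.dist_eq]
  calc |(∫ u in (0:ℝ)..t, ψ u * f n u) - ∫ u in (0:ℝ)..t, ψ u * g u|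
      ≤ |(∫ u in (0:ℝ)..t, ψ u * f n u) - S (f n)| + |S (f n) - S g| +
        |S g - ∫ u in (0:ℝ)..t, ψ u * g u| := by
        have := abs_sub_le ((∫ u in (0:ℝ)..t, ψ u * f n u)) (S (f n)) (∫ u in (0:ℝ)..t, ψ u * g u)
        have h4 := abs_sub_le (S (f n)) (S g) (∫ u in (0:ℝ)..t, ψ u * g u)
        linarith
    _ < ε / 4 + ε / 4 + ε / 4 := by
        rw [abs_sub_comm (S g)]
        have := h1.trans_lt hε₁MT
        have := h2.trans_lt hε₁MT
        linarith
    _ < ε := by linarith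

lemma exists_subseq_limit {M T : ℝ} (hM : 0 ≤ M) (hT : 0 ≤ T) (f : ℕ → ℝ → ℝ)
    (hfm : ∀ n, Measurable (f n)) (hfb : ∀ n x, f n x ∈ Icc 0 M) :
    ∃ (φ : ℕ → ℕ) (g : ℝ → ℝ), StrictMono φ ∧ Measurable g ∧ (∀ x, g x ∈ Icc 0 M) ∧
      ∀ x ∈ Icc (0:ℝ) T, Tendsto (fun n => ∫ u in (0:ℝ)..x, f (φ n) u) atTop
        (𝓝 (∫ u in (0:ℝ)..x, g u)) := by
  rcases eq_or_lt_of_le hM with hM0 | hMpos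
  · -- M = 0 : all functions are 0
    refine ⟨id, fun _ => 0, strictMono_id, measurable_const, by simp [← hM0], ?_⟩
    intro x hx
    have hf0 : ∀ n u, f n u = 0 := fun n u => le_antisymm ((hfb n u).2.trans hM0.symm.le)
      (hfb n u).1
    simp only [hf0, intervalIntegral.integral_zero, intervalIntegral.integral_const,
      smul_zero]
    exact tendsto_const_nhds
  -- notation
  set G : ℕ → ℝ → ℝ := fun n x => ∫ u in (0:ℝ)..x, f n u with hGdef
  have hint : ∀ n a b, IntervalIntegrable (f n) volume a b :=
    fun n a b => auxII (hfm n) (abs_le_of_Icc (hfb n)) a b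
  have hGsub : ∀ n x y, G n x - G n y = ∫ u in y..x, f n u := by
    intro n x y
    exact intervalIntegral.integral_interval_sub_left (hint n 0 x) (hint n 0 y)
  have hGlip : ∀ n x y, |G n x - G n y| ≤ M * |x - y| := by
    intro n x y
    rw [hGsub]
    have := intervalIntegral.norm_integral_le_of_norm_le_const (a := y) (b := x) (C := M)
      (f := f n) (fun u _ => by rw [Real.norm_eq_abs]; exact abs_le_of_Icc (hfb n) u)
    rwa [Real.norm_eq_abs] at this
  have hGmono : ∀ n, Monotone (G n) := by
    intro n x y hxy
    have : 0 ≤ G n y - G n x := by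
      rw [hGsub]
      exact intervalIntegral.integral_nonneg hxy (fun u _ => (hfb n u).1)
    linarith
  have hG0 : ∀ n, G n 0 = 0 := by intro n; simp [hGdef]
  have hGb : ∀ n, ∀ x ∈ Icc (0:ℝ) T, G n x ∈ Icc 0 (M * T) := by
    intro n x hx
    constructor
    · have := hGmono n hx.1; rwa [hG0 n] at this
    · have h1 := hGlip n x 0
      rw [hG0 n, sub_zero, abs_of_nonneg ?gn, sub_zero, abs_of_nonneg hx.1] at h1
      · exact h1.trans (by nlinarith [hx.2])
      case gn => have := hGmono n hx.1; rwa [hG0 n] at this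
  -- clamp to [0, T]
  set cl : ℝ → ℝ := fun x => max 0 (min x T) with hcldef
  have hclmem : ∀ x, cl x ∈ Icc (0:ℝ) T := fun x =>
    ⟨le_max_left _ _, max_le hT (min_le_right _ _)⟩
  have hclid : ∀ x ∈ Icc (0:ℝ) T, cl x = x := by
    intro x hx; simp only [hcldef]; rw [min_eq_left hx.2, max_eq_right hx.1]
  have hcllip : ∀ x y, |cl x - cl y| ≤ |x - y| := by
    intro x y
    have h1 : |min x T - min y T| ≤ max |x - y| |T - T| := abs_min_sub_min_le_max x T y T
    have h2 : |max 0 (min x T) - max 0 (min y T)| ≤ max |(0:ℝ) - 0| |min x T - min y T| :=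
      abs_max_sub_max_le_max 0 (min x T) 0 (min y T)
    have e1 : max |x - y| |T - T| = |x - y| := by
      rw [sub_self, abs_zero]; exact max_eq_left (abs_nonneg _)
    have e2 : max |(0:ℝ) - 0| |min x T - min y T| = |min x T - min y T| := by
      rw [sub_self, abs_zero]; exact max_eq_right (abs_nonneg _)
    exact (h2.trans_eq e2).trans (h1.trans_eq e1)
  have hclmono : Monotone cl := by
    intro x y hxy
    exact max_le_max le_rfl (min_le_min_right T hxy)
  -- compactness in the product space
  haveI : CompactSpace (Icc (0:ℝ) (M*T)) := isCompact_iff_compactSpace.mp isCompact_Icc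
  set F : ℕ → (ℚ → Icc (0:ℝ) (M*T)) := fun n q => ⟨G n (cl q), hGb n _ (hclmem q)⟩ with hFdef
  obtain ⟨y, φ, hφ, hconv⟩ := CompactSpace.tendsto_subseq F
  have hq : ∀ q : ℚ, Tendsto (fun n => G (φ n) (cl q)) atTop (𝓝 (y q : ℝ)) := by
    intro q
    have h1 := tendsto_pi_nhds.1 hconv q
    exact (continuous_subtype_val.tendsto _).comp h1
  -- Cauchy at each point of [0,T]
  have hLex : ∀ x ∈ Icc (0:ℝ) T, ∃ l : ℝ, Tendsto (fun n => G (φ n) x) atTop (𝓝 l) := by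
    intro x hx
    apply cauchySeq_tendsto_of_complete
    rw [Metric.cauchySeq_iff]
    intro ε hε
    have hδ : (0:ℝ) < ε / (4 * (M + 1)) := by positivity
    obtain ⟨q, hq'⟩ := exists_rat_near x hδ
    have hcq : |cl q - x| < ε / (4 * (M + 1)) := by
      have := hcllip q x
      rw [hclid x hx] at this
      calc |cl q - x| = |cl (q:ℝ) - cl x| := by rw [hclid x hx]
        _ ≤ |(q:ℝ) - x| := hcllip _ _
        _ < _ := by rwa [abs_sub_comm]
    have hcau := (hq q).cauchySeq
    rw [Metric.cauchySeq_iff] at hcau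
    obtain ⟨N, hN⟩ := hcau (ε/2) (by positivity)
    refine ⟨N, fun m hm n hn => ?_⟩
    have hd := dist_triangle4 (G (φ m) x) (G (φ m) (cl q)) (G (φ n) (cl q)) (G (φ n) x)
    have h1 : dist (G (φ m) x) (G (φ m) (cl q)) ≤ M * |x - cl q| := by
      rw [Real.dist_eq]; exact hGlip _ _ _
    have h2 : dist (G (φ n) (cl q)) (G (φ n) x) ≤ M * |cl q - x| := by
      rw [Real.dist_eq]; exact hGlip _ _ _
    have h3 := hN m hm n hn
    have hMd : M * |cl q - x| ≤ (M+1) * (ε / (4 * (M + 1))) := by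
      apply mul_le_mul (by linarith) hcq.le (abs_nonneg _) (by linarith)
    have hMe : (M+1) * (ε / (4 * (M + 1))) = ε / 4 := by field_simp
    rw [abs_sub_comm] at hcq
    have hMd' : M * |x - cl q| ≤ (M+1) * (ε / (4 * (M + 1))) := by
      apply mul_le_mul (by linarith) hcq.le (abs_nonneg _) (by linarith)
    calc dist (G (φ m) x) (G (φ n) x) ≤ _ := hd
      _ < ε := by rw [hMe] at hMd hMd'; linarith
  set L : ℝ → ℝ := fun x => limUnder atTop (fun n => G (φ n) x) with hLdef
  have hLt : ∀ x ∈ Icc (0:ℝ) T, Tendsto (fun n => G (φ n) x) atTop (𝓝 (L x)) := by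
    intro x hx
    obtain ⟨l, hl⟩ := hLex x hx
    have h2 : L x = l := hl.limUnder_eq
    rw [h2]
    exact hl
  have hL0 : L 0 = 0 := by
    have h1 := hLt 0 ⟨le_rfl, hT⟩
    simp only [hG0] at h1
    exact (tendsto_nhds_unique h1 tendsto_const_nhds)
  have hLmono : ∀ x ∈ Icc (0:ℝ) T, ∀ z ∈ Icc (0:ℝ) T, x ≤ z → L x ≤ L z := by
    intro x hx z hz hxz
    exact le_of_tendsto_of_tendsto (hLt x hx) (hLt z hz)
      (Eventually.of_forall fun n => hGmono (φ n) hxz)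
  have hLlip : ∀ x ∈ Icc (0:ℝ) T, ∀ z ∈ Icc (0:ℝ) T, |L x - L z| ≤ M * |x - z| := by
    intro x hx z hz
    apply le_of_tendsto (((hLt x hx).sub (hLt z hz)).abs)
    exact Eventually.of_forall fun n => hGlip (φ n) x z
  -- the Stieltjes function
  set W : ℝ → ℝ := fun x => L (cl x) with hWdef
  have hWmono : Monotone W := fun x z hxz =>
    hLmono _ (hclmem x) _ (hclmem z) (hclmono hxz)
  have hWlip : ∀ x z, |W x - W z| ≤ M * |x - z| := by
    intro x z
    calc |W x - W z| ≤ M * |cl x - cl z| := hLlip _ (hclmem x) _ (hclmem z)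
      _ ≤ M * |x - z| := mul_le_mul_of_nonneg_left (hcllip x z) hM
  have hWcont : Continuous W := by
    rw [Metric.continuous_iff]
    intro x ε hε
    refine ⟨ε / (M + 1), by positivity, fun z hz => ?_⟩
    rw [Real.dist_eq] at *
    calc |W z - W x| ≤ M * |z - x| := hWlip z x
      _ ≤ M * (ε / (M+1)) := mul_le_mul_of_nonneg_left hz.le hM
      _ < (M+1) * (ε / (M+1)) := mul_lt_mul_of_pos_right (lt_add_one M) (by positivity)
      _ = ε := by field_simp
  set St : StieltjesFunction ℝ := ⟨W, hWmono, fun x => hWcont.continuousAt.continuousWithinAt⟩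
    with hStdef
  set D : ℝ → ℝ := fun x => M * x - W x with hDdef
  have hDmono : Monotone D := by
    intro x z hxz
    have h1 := hWlip z x
    have h2 : W z - W x ≤ M * (z - x) := by
      have := le_abs_self (W z - W x)
      have h3 : |z - x| = z - x := abs_of_nonneg (by linarith)
      rw [h3] at h1; linarith
    simp only [hDdef]; nlinarith
  have hDcont : Continuous D := (continuous_const.mul continuous_id).sub hWcont
  set Dst : StieltjesFunction ℝ := ⟨D, hDmono, fun x => hDcont.continuousAt.continuousWithinAt⟩
    with hDstdef
  set μ : Measure ℝ := St.measure with hμdef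
  set r : NNReal := M.toNNReal with hrdef
  have hIoc : ∀ x z : ℝ, x ≤ z → μ (Ioc x z) = ENNReal.ofReal (W z - W x) := by
    intro x z _; exact St.measure_Ioc x z
  -- μ + Dst.measure = r • volume
  haveI : IsLocallyFiniteMeasure (μ + Dst.measure) := by
    refine ⟨fun x => ?_⟩
    obtain ⟨s, hs, h1⟩ := μ.finiteAt_nhds x
    obtain ⟨t, ht, h2⟩ := Dst.measure.finiteAt_nhds x
    refine ⟨s ∩ t, inter_mem hs ht, ?_⟩
    rw [Measure.add_apply]
    exact ENNReal.add_lt_top.2 ⟨lt_of_le_of_lt (measure_mono inter_subset_left) h1,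
      lt_of_le_of_lt (measure_mono inter_subset_right) h2⟩
  have hsum : μ + Dst.measure = (r : ℝ≥0) • volume := by
    apply MeasureTheory.Measure.ext_of_Ioc
    intro x z hxz
    rw [Measure.add_apply, St.measure_Ioc, Dst.measure_Ioc, Measure.smul_apply,
      Real.volume_Ioc, ENNReal.smul_def, smul_eq_mul]
    have h1 : (0:ℝ) ≤ W z - W x := by have := hWmono hxz.le; linarith
    have h2 : (0:ℝ) ≤ D z - D x := by have := hDmono hxz.le; linarith
    show ENNReal.ofReal (W z - W x) + ENNReal.ofReal (D z - D x)
      = (r : ℝ≥0∞) * ENNReal.ofReal (z - x)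
    rw [← ENNReal.ofReal_add h1 h2]
    have hcoe : (r : ℝ≥0∞) = ENNReal.ofReal M := by
      simp [hrdef, ENNReal.ofReal]
    rw [hcoe, ← ENNReal.ofReal_mul hM]
    congr 1
    simp only [hDdef]; ring
  have hle : μ ≤ (r : ℝ≥0) • volume := by
    rw [← hsum]; exact Measure.le_add_right le_rfl
  have hac : μ ≪ volume :=
    (Measure.absolutelyContinuous_of_le hle).trans Measure.smul_absolutelyContinuous
  have hr0 : r ≠ 0 := by
    simp only [hrdef, ne_eq, Real.toNNReal_eq_zero, not_le]
    exact hMpos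
  -- a.e. bound on the RN derivative
  have hbd : ∀ᵐ x ∂(volume : Measure ℝ), μ.rnDeriv volume x ≤ ENNReal.ofReal M := by
    have h1 : μ.rnDeriv ((r : ℝ≥0) • (volume : Measure ℝ)) ≤ᵐ[(r : ℝ≥0) • (volume : Measure ℝ)] 1 :=
      Measure.rnDeriv_le_one_of_le hle
    have h2 : μ.rnDeriv ((r : ℝ≥0) • (volume : Measure ℝ))
        =ᵐ[(volume : Measure ℝ)] r⁻¹ • μ.rnDeriv volume :=
      Measure.rnDeriv_smul_right' μ volume hr0
    have h1' : μ.rnDeriv ((r : ℝ≥0) • (volume : Measure ℝ)) ≤ᵐ[(volume : Measure ℝ)] 1 := by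
      have hvac : (volume : Measure ℝ) ≪ (r : ℝ≥0) • (volume : Measure ℝ) :=
        Measure.absolutelyContinuous_smul (ENNReal.coe_ne_zero.2 hr0)
      exact hvac.ae_le h1
    filter_upwards [h1', h2] with x hx1 hx2
    rw [hx2] at hx1
    have h3 : ((r : ℝ≥0∞))⁻¹ * μ.rnDeriv volume x ≤ 1 := by
      have he : (r⁻¹ • μ.rnDeriv volume) x = ((r⁻¹ : ℝ≥0) : ℝ≥0∞) * μ.rnDeriv volume x := rfl
      rw [he, ENNReal.coe_inv hr0] at hx1
      simpa using hx1
    have h4 : (r : ℝ≥0∞) ≠ 0 := ENNReal.coe_ne_zero.2 hr0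
    have h5 : (r : ℝ≥0∞) ≠ ⊤ := ENNReal.coe_ne_top
    have h6 : μ.rnDeriv volume x = (r : ℝ≥0∞) * (((r : ℝ≥0∞))⁻¹ * μ.rnDeriv volume x) := by
      rw [← mul_assoc, ENNReal.mul_inv_cancel h4 h5, one_mul]
    rw [h6]
    have hcoe : (r : ℝ≥0∞) = ENNReal.ofReal M := by simp [hrdef, ENNReal.ofReal]
    calc (r : ℝ≥0∞) * (((r : ℝ≥0∞))⁻¹ * μ.rnDeriv volume x) ≤ (r : ℝ≥0∞) * 1 :=
        mul_le_mul_right h3 _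
      _ = ENNReal.ofReal M := by rw [mul_one, hcoe]
  -- the limit control
  set g : ℝ → ℝ := fun x => min M ((μ.rnDeriv volume x).toReal) with hgdef
  have hgm : Measurable g :=
    measurable_const.min (Measure.measurable_rnDeriv μ volume).ennreal_toReal
  have hgb : ∀ x, g x ∈ Icc 0 M :=
    fun x => ⟨le_min hM ENNReal.toReal_nonneg, min_le_left _ _⟩
  have hgae : g =ᵐ[(volume : Measure ℝ)] fun x => (μ.rnDeriv volume x).toReal := by
    filter_upwards [hbd] with x hx
    simp only [hgdef]
    exact min_eq_right (ENNReal.toReal_le_of_le_ofReal hM hx)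
  have hgint : ∀ x ∈ Icc (0:ℝ) T, (∫ u in (0:ℝ)..x, g u) = L x := by
    intro x hx
    rw [intervalIntegral.integral_of_le hx.1]
    rw [integral_congr_ae (ae_restrict_of_ae hgae)]
    rw [Measure.setIntegral_toReal_rnDeriv hac (Ioc 0 x)]
    rw [measureReal_def, hIoc 0 x hx.1]
    have hW0 : W 0 = 0 := by
      simp only [hWdef]
      have : cl 0 = 0 := hclid 0 ⟨le_rfl, hT⟩
      rw [this, hL0]
    have hWx : W x = L x := by simp only [hWdef]; rw [hclid x hx]
    rw [hW0, sub_zero, hWx, ENNReal.toReal_ofReal]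
    have := hLmono 0 ⟨le_rfl, hT⟩ x hx hx.1
    rw [hL0] at this; exact this
  refine ⟨φ, g, hφ, hgm, hgb, ?_⟩
  intro x hx
  rw [hgint x hx]
  exact hLt x hx

lemma comp_conv {M T τ : ℝ} (hM : 0 ≤ M) (hτ : 0 < τ)
    (f : ℕ → ℝ → ℝ) (g : ℝ → ℝ)
    (hfm : ∀ n, Measurable (f n)) (hfb : ∀ n x, f n x ∈ Icc 0 M)
    (hgm : Measurable g) (hgb : ∀ x, g x ∈ Icc 0 M)
    (hVconv : ∀ u ∈ Icc (0:ℝ) T, Tendsto (fun n => runnerV τ (f n) u) atTop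
      (𝓝 (runnerV τ g u)))
    (hG : ∀ x ∈ Icc (0:ℝ) T, Tendsto (fun n => ∫ u in (0:ℝ)..x, f n u) atTop
      (𝓝 (∫ u in (0:ℝ)..x, g u)))
    {Θ : ℝ → ℝ} (hΘ : Continuous Θ) {t : ℝ} (ht : t ∈ Icc (0:ℝ) T) :
    Tendsto (fun n => ∫ u in (0:ℝ)..t, f n u * Θ (runnerV τ (f n) u)) atTop
      (𝓝 (∫ u in (0:ℝ)..t, g u * Θ (runnerV τ g u))) := by
  have hT : (0:ℝ) ≤ T := le_trans ht.1 ht.2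
  have hMT : (0:ℝ) ≤ M * T := mul_nonneg hM hT
  set ψ : ℝ → ℝ := fun u => Θ (runnerV τ g u) with hψdef
  have hψc : Continuous ψ := hΘ.comp (runnerV_continuous hgm hgb)
  obtain ⟨K, hK⟩ := (isCompact_Icc (a := (0:ℝ)) (b := M * T)).exists_bound_of_continuousOn
    hΘ.continuousOn
  have hK0 : 0 ≤ K := le_trans (norm_nonneg _) (hK 0 ⟨le_rfl, hMT⟩)
  have hsub : Ioc (0:ℝ) t ⊆ Icc (0:ℝ) T := fun x hx => ⟨hx.1.le, hx.2.trans ht.2⟩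
  have hΘVb : ∀ (h : ℝ → ℝ), (∀ x, h x ∈ Icc 0 M) → ∀ u ∈ Icc (0:ℝ) T,
      |Θ (runnerV τ h u)| ≤ K := by
    intro h hb u hu
    have := hK _ (runnerV_mem hτ hM hb hu)
    rwa [Real.norm_eq_abs] at this
  -- integrability of the difference term
  have hInt1 : ∀ n, IntegrableOn (fun u => f n u * (Θ (runnerV τ (f n) u) - ψ u))
      (Ioc (0:ℝ) t) := by
    intro n
    apply auxIntegrableOn (C := M * (K + K))
    · exact ((hfm n).mul (((hΘ.comp (runnerV_continuous (hfm n) (hfb n))).sub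
        hψc).measurable)).aestronglyMeasurable
    · intro x hx
      have hxT := hsub hx
      rw [abs_mul]
      have h1 : |Θ (runnerV τ (f n) x) - ψ x| ≤ K + K := by
        calc |Θ (runnerV τ (f n) x) - ψ x| ≤ |Θ (runnerV τ (f n) x)| + |ψ x| := abs_sub _ _
          _ ≤ K + K := add_le_add (hΘVb (f n) (hfb n) x hxT) (hΘVb g hgb x hxT)
      exact mul_le_mul (abs_le_of_Icc (hfb n) x) h1 (abs_nonneg _) hM
  have hInt2 : ∀ n, IntegrableOn (fun u => ψ u * f n u) (Ioc (0:ℝ) t) := by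
    intro n
    have := auxIImul hψc (hfm n) (abs_le_of_Icc (hfb n)) 0 t
    rw [intervalIntegrable_iff, uIoc_of_le ht.1] at this
    exact this
  have hII1 : ∀ n, IntervalIntegrable (fun u => f n u * (Θ (runnerV τ (f n) u) - ψ u))
      volume 0 t := by
    intro n
    rw [intervalIntegrable_iff, uIoc_of_le ht.1]
    exact hInt1 n
  have hII2 : ∀ n, IntervalIntegrable (fun u => ψ u * f n u) volume 0 t := by
    intro n
    rw [intervalIntegrable_iff, uIoc_of_le ht.1]
    exact hInt2 n
  -- decomposition
  have hdecomp : ∀ n, (∫ u in (0:ℝ)..t, f n u * Θ (runnerV τ (f n) u)) =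
      (∫ u in (0:ℝ)..t, f n u * (Θ (runnerV τ (f n) u) - ψ u)) +
        ∫ u in (0:ℝ)..t, ψ u * f n u := by
    intro n
    rw [← intervalIntegral.integral_add (hII1 n) (hII2 n)]
    exact intervalIntegral.integral_congr (fun x _ => by ring)
  -- the difference term tends to 0
  have hT1set : Tendsto (fun n => ∫ u in Ioc (0:ℝ) t, f n u * (Θ (runnerV τ (f n) u) - ψ u))
      atTop (𝓝 (∫ u in Ioc (0:ℝ) t, (0:ℝ) ∂volume)) := by
    apply tendsto_integral_of_dominated_convergence (fun _ => M * (K + K))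
    · intro n
      exact ((hfm n).mul (((hΘ.comp (runnerV_continuous (hfm n) (hfb n))).sub
        hψc).measurable)).aestronglyMeasurable
    · exact integrableOn_const measure_Ioc_lt_top.ne
    · intro n
      refine (ae_restrict_iff' measurableSet_Ioc).2 (ae_of_all _ ?_)
      intro x hx
      have hxT := hsub hx
      rw [Real.norm_eq_abs, abs_mul]
      have h1 : |Θ (runnerV τ (f n) x) - ψ x| ≤ K + K := by
        calc |Θ (runnerV τ (f n) x) - ψ x| ≤ |Θ (runnerV τ (f n) x)| + |ψ x| := abs_sub _ _
          _ ≤ K + K := add_le_add (hΘVb (f n) (hfb n) x hxT) (hΘVb g hgb x hxT)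
      exact mul_le_mul (abs_le_of_Icc (hfb n) x) h1 (abs_nonneg _) hM
    · refine (ae_restrict_iff' measurableSet_Ioc).2 (ae_of_all _ ?_)
      intro x hx
      have hxT := hsub hx
      apply squeeze_zero_norm (a := fun n => M * |Θ (runnerV τ (f n) x) - ψ x|)
      · intro n
        rw [Real.norm_eq_abs, abs_mul]
        exact mul_le_mul_of_nonneg_right (abs_le_of_Icc (hfb n) x) (abs_nonneg _)
      · have h2 : Tendsto (fun n => Θ (runnerV τ (f n) x)) atTop (𝓝 (ψ x)) :=
          ((hΘ.tendsto _).comp (hVconv x hxT))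
        have h3 : Tendsto (fun n => Θ (runnerV τ (f n) x) - ψ x) atTop (𝓝 0) := by
          have := h2.sub (tendsto_const_nhds (x := ψ x) (f := atTop))
          rwa [sub_self] at this
        have h4 := (tendsto_const_nhds (x := M) (f := atTop)).mul h3.abs
        rwa [abs_zero, mul_zero] at h4
  have hT1 : Tendsto (fun n => ∫ u in (0:ℝ)..t, f n u * (Θ (runnerV τ (f n) u) - ψ u))
      atTop (𝓝 0) := by
    simp only [intervalIntegral.integral_of_le ht.1]
    simpa using hT1set
  have hT2 := weak_conv hM f g hfm hfb hgm hgb hG hψc ht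
  have hfun : (fun n => ∫ u in (0:ℝ)..t, f n u * Θ (runnerV τ (f n) u)) =
      fun n => (∫ u in (0:ℝ)..t, f n u * (Θ (runnerV τ (f n) u) - ψ u)) +
        ∫ u in (0:ℝ)..t, ψ u * f n u := funext hdecomp
  rw [hfun]
  have hfinal : (∫ u in (0:ℝ)..t, g u * Θ (runnerV τ g u)) =
      0 + ∫ u in (0:ℝ)..t, ψ u * g u := by
    rw [zero_add]
    exact intervalIntegral.integral_congr (fun x _ => mul_comm _ _)
  rw [hfinal]
  exact hT1.add hT2

end Auxiliary2

section MainProof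
open Filter Topology intervalIntegral

set_option maxHeartbeats 2000000 in
/-- Existence of an optimal propulsion force for the maximum-distance runner problem. -/
theorem exists_optimal_control
    (T τ fmax a c₃ c₄ d smax EF0 EG0 : ℝ)
    (hT : 0 < T) (hτ : 0 < τ) (hfmax : 0 < fmax) (ha : 0 < a)
    (hc₃ : 0 < c₃) (hc₄ : 0 < c₄) (hd : 0 < d) (hsmax : 0 < smax)
    (hEF0 : 0 ≤ EF0) (hEG0 : 0 ≤ EG0)
    (s : ℝ → ℝ) (hs_meas : Measurable s)
    (hs_bds : ∀ᵐ t ∂(volume.restrict (Icc (0:ℝ) T)), 0 ≤ s t ∧ s t ≤ smax)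
    (glyc : ℝ → ℝ) (hglyc_cont : Continuous glyc)
    (hglyc_bds : ∀ v, 0 ≤ glyc v ∧ glyc v ≤ 1) :
    ∃ fstar ∈ admissible T τ fmax a c₃ c₄ d EF0 EG0 glyc s,
      ∀ f ∈ admissible T τ fmax a c₃ c₄ d EF0 EG0 glyc s,
        (∫ t in (0:ℝ)..T, runnerV τ f t) ≤ ∫ t in (0:ℝ)..T, runnerV τ fstar t := by
  classical
  set A := admissible T τ fmax a c₃ c₄ d EF0 EG0 glyc s with hAdef
  have hT0 : (0:ℝ) ≤ T := hT.le
  have hM0 : (0:ℝ) ≤ fmax := hfmax.le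
  -- nonnegativity of the nutrition
  have hN_nonneg : ∀ u ∈ Icc (0:ℝ) T, 0 ≤ runnerN d c₄ s u := by
    intro u hu
    unfold runnerN
    rw [intervalIntegral.integral_of_le hu.1]
    apply MeasureTheory.integral_nonneg_of_ae
    have hae : ∀ᵐ x ∂(volume.restrict (Ioc 0 u)), 0 ≤ s x ∧ s x ≤ smax :=
      ae_mono (Measure.restrict_mono
        (by intro x hx; exact mem_Icc.2 ⟨hx.1.le, hx.2.trans hu.2⟩) le_rfl) hs_bds
    filter_upwards [hae] with x hx
    exact mul_nonneg (exp_pos _).le hx.1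
  -- zero is admissible
  have hV0 : ∀ t : ℝ, runnerV τ (fun _ => (0:ℝ)) t = 0 := by
    intro t; unfold runnerV; simp
  have h0A : (fun _ : ℝ => (0:ℝ)) ∈ A := by
    refine ⟨measurable_const, ae_of_all _ (fun t => ⟨le_rfl, hM0⟩), ?_, ?_⟩
    · intro t ht
      unfold runnerEF
      simpa using hEF0
    · intro t ht
      unfold runnerEG
      have h1 : 0 ≤ ∫ u in (0:ℝ)..t, (c₃ * c₄ * runnerN d c₄ s u -
          a * (0:ℝ) * runnerV τ (fun _ => (0:ℝ)) u * glyc (runnerV τ (fun _ => (0:ℝ)) u)) := by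
        apply intervalIntegral.integral_nonneg ht.1
        intro u hu
        have hN := hN_nonneg u ⟨hu.1, hu.2.trans ht.2⟩
        have : a * (0:ℝ) * runnerV τ (fun _ => (0:ℝ)) u * glyc (runnerV τ (fun _ => (0:ℝ)) u)
            = 0 := by ring
        rw [this, sub_zero]
        exact mul_nonneg (mul_nonneg hc₃.le hc₄.le) hN
      linarith [h1]
  -- objective functional
  set J : (ℝ → ℝ) → ℝ := fun f => ∫ t in (0:ℝ)..T, runnerV τ f t with hJdef
  -- clamping admissible controls
  have hclampA : ∀ f ∈ A, (clamp fmax f ∈ A) ∧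
      (∀ t ∈ Icc (0:ℝ) T, runnerV τ (clamp fmax f) t = runnerV τ f t) ∧
      J (clamp fmax f) = J f := by
    intro f hf
    obtain ⟨hfm, hfb, hEF, hEG⟩ := hf
    have hae : clamp fmax f =ᵐ[volume.restrict (Icc 0 T)] f := by
      filter_upwards [hfb] with x hx
      exact clamp_eq hx.1 hx.2
    have hVeq : ∀ t ∈ Icc (0:ℝ) T, runnerV τ (clamp fmax f) t = runnerV τ f t :=
      fun t ht => runnerV_congr_ae hae ht
    refine ⟨⟨clamp_meas hfm, ae_of_all _ (fun x => ⟨(clamp_mem_Icc hM0 f x).1,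
      (clamp_mem_Icc hM0 f x).2⟩), ?_, ?_⟩, hVeq, ?_⟩
    · intro t ht; rw [runnerEF_congr_ae hae ht]; exact hEF t ht
    · intro t ht; rw [runnerEG_congr_ae hae ht]; exact hEG t ht
    · apply intervalIntegral.integral_congr
      intro x hx
      rw [uIcc_of_le hT0] at hx
      exact hVeq x hx
  -- boundedness of J on A
  have hJle : ∀ f ∈ A, J f ≤ fmax * T * T := by
    intro f hf
    obtain ⟨hcA, hVeq, hJeq⟩ := hclampA f hf
    rw [← hJeq]
    have hcfb : ∀ x, clamp fmax f x ∈ Icc 0 fmax := clamp_mem_Icc hM0 f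
    have h := intervalIntegral.norm_integral_le_of_norm_le_const (a := 0) (b := T)
      (C := fmax * T) (f := fun t => runnerV τ (clamp fmax f) t) ?_
    · calc J (clamp fmax f) ≤ |J (clamp fmax f)| := le_abs_self _
        _ ≤ fmax * T * |T - 0| := h
        _ = fmax * T * T := by rw [sub_zero, abs_of_nonneg hT0]
    · intro x hx
      rw [uIoc_of_le hT0] at hx
      have hmem := runnerV_mem (T := T) hτ hM0 hcfb ⟨hx.1.le, hx.2⟩
      rw [Real.norm_eq_abs, abs_of_nonneg hmem.1]
      exact hmem.2
  have hne : (J '' A).Nonempty := ⟨J (fun _ => 0), ⟨_, h0A, rfl⟩⟩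
  have hbdd : BddAbove (J '' A) := by
    refine ⟨fmax * T * T, ?_⟩
    rintro yy ⟨f, hf, rfl⟩
    exact hJle f hf
  set S := sSup (J '' A) with hSdef
  have hJS : ∀ f ∈ A, J f ≤ S := fun f hf => le_csSup hbdd ⟨f, hf, rfl⟩
  -- maximizing sequence
  have hseq : ∀ n : ℕ, ∃ f, f ∈ A ∧ S - 1/((n:ℝ)+1) < J f := by
    intro n
    have h1 : S - 1/((n:ℝ)+1) < S := by
      have : (0:ℝ) < 1/((n:ℝ)+1) := by positivity
      linarith
    obtain ⟨yy, ⟨f, hf, rfl⟩, hyy⟩ := exists_lt_of_lt_csSup hne h1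
    exact ⟨f, hf, hyy⟩
  choose fs hfsA hfsJ using hseq
  set cf : ℕ → ℝ → ℝ := fun n => clamp fmax (fs n) with hcfdef
  have hcfm : ∀ n, Measurable (cf n) := fun n => clamp_meas (hfsA n).1
  have hcfb : ∀ n x, cf n x ∈ Icc 0 fmax := fun n => clamp_mem_Icc hM0 (fs n)
  have hcfA : ∀ n, cf n ∈ A := fun n => (hclampA _ (hfsA n)).1
  have hcfJ : ∀ n, J (cf n) = J (fs n) := fun n => (hclampA _ (hfsA n)).2.2
  -- extraction of a weak*-convergent subsequence
  obtain ⟨φ, g, hφ, hgm, hgb, hGconv⟩ := exists_subseq_limit hM0 hT0 cf hcfm hcfb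
  -- velocity convergence
  have hVconv : ∀ u ∈ Icc (0:ℝ) T,
      Tendsto (fun n => runnerV τ (cf (φ n)) u) atTop (𝓝 (runnerV τ g u)) := by
    intro u hu
    have hψ : Continuous fun x => Real.exp (-(u - x)/τ) :=
      Real.continuous_exp.comp (((continuous_const.sub continuous_id).neg).div_const τ)
    exact weak_conv hM0 (fun n => cf (φ n)) g (fun n => hcfm (φ n)) (fun n => hcfb (φ n))
      hgm hgb hGconv hψ hu
  -- master composite convergence
  have hcomp : ∀ (Θ : ℝ → ℝ), Continuous Θ → ∀ t ∈ Icc (0:ℝ) T,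
      Tendsto (fun n => ∫ u in (0:ℝ)..t, cf (φ n) u * Θ (runnerV τ (cf (φ n)) u)) atTop
        (𝓝 (∫ u in (0:ℝ)..t, g u * Θ (runnerV τ g u))) :=
    fun Θ hΘ t ht => comp_conv hM0 hτ (fun n => cf (φ n)) g (fun n => hcfm (φ n))
      (fun n => hcfb (φ n)) hgm hgb hVconv hGconv hΘ ht
  set Θ1 : ℝ → ℝ := fun v => v * (1 - glyc v) with hΘ1def
  have hΘ1c : Continuous Θ1 := continuous_id.mul (continuous_const.sub hglyc_cont)
  set Θ2 : ℝ → ℝ := fun v => v * glyc v with hΘ2def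
  have hΘ2c : Continuous Θ2 := continuous_id.mul hglyc_cont
  -- rewriting the EF energy
  have hEFrw : ∀ (h : ℝ → ℝ) (t : ℝ), runnerEF τ a EF0 glyc h t =
      EF0 - a * ∫ u in (0:ℝ)..t, h u * Θ1 (runnerV τ h u) := by
    intro h t
    unfold runnerEF
    congr 2
    apply intervalIntegral.integral_congr
    intro x _
    show h x * runnerV τ h x * (1 - glyc (runnerV τ h x)) = h x * Θ1 (runnerV τ h x)
    simp only [hΘ1def]
    ring
  -- EF constraint passes to the limit
  have hEFg : ∀ t ∈ Icc (0:ℝ) T, 0 ≤ runnerEF τ a EF0 glyc g t := by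
    intro t ht
    rw [hEFrw g t]
    have hconv := hcomp Θ1 hΘ1c t ht
    have hlim : Tendsto (fun n => EF0 - a * ∫ u in (0:ℝ)..t,
        cf (φ n) u * Θ1 (runnerV τ (cf (φ n)) u)) atTop
        (𝓝 (EF0 - a * ∫ u in (0:ℝ)..t, g u * Θ1 (runnerV τ g u))) :=
      tendsto_const_nhds.sub (tendsto_const_nhds.mul hconv)
    apply ge_of_tendsto' hlim
    intro n
    rw [← hEFrw (cf (φ n)) t]
    exact (hcfA (φ n)).2.2.1 t ht
  -- nutrition facts
  set s' : ℝ → ℝ := clamp smax s with hs'def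
  have hs'm : Measurable s' := clamp_meas hs_meas
  have hs'b : ∀ x, s' x ∈ Icc 0 smax := clamp_mem_Icc hsmax.le s
  have hsae : s' =ᵐ[volume.restrict (Icc 0 T)] s := by
    filter_upwards [hs_bds] with x hx
    exact clamp_eq hx.1 hx.2
  have hNrw : ∀ u ∈ Icc (0:ℝ) T, runnerN d c₄ s u = runnerV (d+c₄)⁻¹ s' u := by
    intro u hu
    have h1 : runnerN d c₄ s u = runnerN d c₄ s' u := by
      unfold runnerN
      apply integral_congr_ae' hu.1
      filter_upwards [ae_restrict_sub hsae hu] with x hx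
      rw [hx]
    have h2 : runnerN d c₄ s' u = runnerV (d+c₄)⁻¹ s' u := by
      unfold runnerN runnerV
      apply intervalIntegral.integral_congr
      intro x _
      show Real.exp (-(d + c₄) * (u - x)) * s' x = Real.exp (-(u - x) / (d + c₄)⁻¹) * s' x
      have harg : -(d + c₄) * (u - x) = -(u - x) / (d + c₄)⁻¹ := by
        rw [div_eq_mul_inv, inv_inv]; ring
      rw [harg]
    rw [h1, h2]
  set Xf : ℝ → ℝ := fun u => c₃ * c₄ * runnerV (d+c₄)⁻¹ s' u with hXdef
  have hXc : Continuous Xf := continuous_const.mul (runnerV_continuous hs'm hs'b)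
  -- rewriting the EG energy
  have hEGrw : ∀ (h : ℝ → ℝ), Measurable h → (∀ x, h x ∈ Icc 0 fmax) →
      ∀ t ∈ Icc (0:ℝ) T, runnerEG τ a c₃ c₄ d EG0 glyc s h t =
      EG0 + ((∫ u in (0:ℝ)..t, Xf u) -
        a * ∫ u in (0:ℝ)..t, h u * Θ2 (runnerV τ h u)) := by
    intro h hm hb t ht
    unfold runnerEG
    congr 1
    have hptw : ∀ x ∈ uIcc (0:ℝ) t,
        (c₃ * c₄ * runnerN d c₄ s x - a * h x * runnerV τ h x * glyc (runnerV τ h x)) =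
        Xf x - a * (h x * Θ2 (runnerV τ h x)) := by
      intro x hx
      rw [uIcc_of_le ht.1] at hx
      rw [hNrw x ⟨hx.1, hx.2.trans ht.2⟩]
      simp only [hXdef, hΘ2def]
      ring
    rw [intervalIntegral.integral_congr hptw]
    have hXint : IntervalIntegrable Xf volume 0 t := hXc.intervalIntegrable 0 t
    have hprod : IntervalIntegrable (fun x => a * (h x * Θ2 (runnerV τ h x))) volume 0 t := by
      have heqf : (fun x => a * (h x * Θ2 (runnerV τ h x))) =
          fun x => (a * Θ2 (runnerV τ h x)) * h x := by
        funext x; ring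
      rw [heqf]
      exact auxIImul (continuous_const.mul (hΘ2c.comp (runnerV_continuous hm hb))) hm
        (abs_le_of_Icc hb) 0 t
    rw [intervalIntegral.integral_sub hXint hprod, intervalIntegral.integral_const_mul,
      intervalIntegral.integral_const_mul]
  -- EG constraint passes to the limit
  have hEGg : ∀ t ∈ Icc (0:ℝ) T, 0 ≤ runnerEG τ a c₃ c₄ d EG0 glyc s g t := by
    intro t ht
    rw [hEGrw g hgm hgb t ht]
    have hconv := hcomp Θ2 hΘ2c t ht
    have hlim : Tendsto (fun n => EG0 + ((∫ u in (0:ℝ)..t, Xf u) -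
        a * ∫ u in (0:ℝ)..t, cf (φ n) u * Θ2 (runnerV τ (cf (φ n)) u))) atTop
        (𝓝 (EG0 + ((∫ u in (0:ℝ)..t, Xf u) -
          a * ∫ u in (0:ℝ)..t, g u * Θ2 (runnerV τ g u)))) :=
      tendsto_const_nhds.add (tendsto_const_nhds.sub (tendsto_const_nhds.mul hconv))
    apply ge_of_tendsto' hlim
    intro n
    rw [← hEGrw (cf (φ n)) (hcfm (φ n)) (hcfb (φ n)) t ht]
    exact (hcfA (φ n)).2.2.2 t ht
  -- g is admissible
  have hgA : g ∈ A :=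
    ⟨hgm, ae_of_all _ (fun x => ⟨(hgb x).1, (hgb x).2⟩), hEFg, hEGg⟩
  -- convergence of the objective values
  have hJconv : Tendsto (fun n => J (cf (φ n))) atTop (𝓝 (J g)) := by
    have hset : Tendsto (fun n => ∫ t in Ioc (0:ℝ) T, runnerV τ (cf (φ n)) t) atTop
        (𝓝 (∫ t in Ioc (0:ℝ) T, runnerV τ g t)) := by
      apply tendsto_integral_of_dominated_convergence (fun _ => fmax * T)
      · intro n
        exact (runnerV_continuous (hcfm (φ n)) (hcfb (φ n))).measurable.aestronglyMeasurable
      · exact integrableOn_const measure_Ioc_lt_top.ne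
      · intro n
        refine (ae_restrict_iff' measurableSet_Ioc).2 (ae_of_all _ ?_)
        intro x hx
        have hmem := runnerV_mem (T := T) hτ hM0 (hcfb (φ n)) ⟨hx.1.le, hx.2⟩
        rw [Real.norm_eq_abs, abs_of_nonneg hmem.1]
        exact hmem.2
      · refine (ae_restrict_iff' measurableSet_Ioc).2 (ae_of_all _ ?_)
        intro x hx
        exact hVconv x ⟨hx.1.le, hx.2⟩
    simp only [hJdef, intervalIntegral.integral_of_le hT0]
    exact hset
  -- the objective values converge to the supremum
  have hJlim : Tendsto (fun n => J (cf (φ n))) atTop (𝓝 S) := by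
    apply tendsto_of_tendsto_of_tendsto_of_le_of_le
      (g := fun n => S - 1/((φ n : ℝ)+1)) (h := fun _ => S)
    · have h1 : Tendsto (fun n : ℕ => 1/((n:ℝ)+1)) atTop (𝓝 0) :=
        tendsto_one_div_add_atTop_nhds_zero_nat
      have h2 : Tendsto (fun n => 1/((φ n : ℝ)+1)) atTop (𝓝 0) :=
        h1.comp hφ.tendsto_atTop
      have h3 := (tendsto_const_nhds (x := S) (f := atTop)).sub h2
      simpa using h3
    · exact tendsto_const_nhds
    · intro n
      have := hfsJ (φ n)
      rw [← hcfJ (φ n)] at this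
      exact this.le
    · intro n
      exact hJS _ (hcfA (φ n))
  have hJgS : J g = S := tendsto_nhds_unique hJconv hJlim
  refine ⟨g, hgA, ?_⟩
  intro f hf
  calc (∫ t in (0:ℝ)..T, runnerV τ f t) = J f := rfl
    _ ≤ S := hJS f hf
    _ = J g := hJgS.symm
    _ = _ := rfl

end MainProof
end

section
/- Let T > 0, τ > 0, f_max > 0, a > 0, E_F0 ≥ 0, and let glyc : ℝ → ℝ be continuous with 0 ≤ glyc(v) ≤ 1 for all v. Let f : [0,T] → ℝ be measurable with 0 ≤ f(t) ≤ f_max a.e. Then the fat energy E_F[f] is nonincreasing on [0,T] and satisfies E_F[f](t) ≥ E_F0 - a τ f_max² t for all t ∈ [0,T]; in particular, if E_F0 > a τ f_max² T, then E_F[f](t) > 0 for all t ∈ [0,T] (the fat-energy constraint is never tight for any admissible control). -/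
set_option maxHeartbeats 1000000

open MeasureTheory Real Set

section Aux

variable {T τ fmax : ℝ} {f : ℝ → ℝ}

lemma aux_Vnn (hT : 0 < T) (hτ : 0 < τ) (hfmax : 0 < fmax)
    (hf_bds : ∀ᵐ t ∂(volume.restrict (Icc (0:ℝ) T)), 0 ≤ f t ∧ f t ≤ fmax) :
    ∀ t ∈ Icc (0:ℝ) T, 0 ≤ runnerV τ f t := by
  intro t ht
  apply intervalIntegral.integral_nonneg_of_ae_restrict ht.1
  have hsub : Icc (0:ℝ) t ⊆ Icc (0:ℝ) T := Icc_subset_Icc le_rfl ht.2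
  filter_upwards [ae_restrict_of_ae_restrict_of_subset hsub hf_bds] with u hu
  exact mul_nonneg (Real.exp_nonneg _) hu.1

lemma aux_ker_int (hT : 0 < T) (hτ : 0 < τ) (hfmax : 0 < fmax) (hf_meas : Measurable f)
    (hf_bds : ∀ᵐ t ∂(volume.restrict (Icc (0:ℝ) T)), 0 ≤ f t ∧ f t ≤ fmax) :
    ∀ t ∈ Icc (0:ℝ) T,
      IntegrableOn (fun u => Real.exp (-(t - u) / τ) * f u) (Icc (0:ℝ) t) volume := by
  intro t ht
  have hm : Measurable (fun u : ℝ => Real.exp (-(t - u) / τ)) :=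
    Real.measurable_exp.comp (((measurable_const.sub measurable_id).neg).div_const τ)
  have hmeas : AEStronglyMeasurable (fun u => Real.exp (-(t - u) / τ) * f u)
      (volume.restrict (Icc (0:ℝ) t)) := (hm.mul hf_meas).aestronglyMeasurable
  refine Integrable.mono' (integrable_const fmax) hmeas ?_
  have hsub : Icc (0:ℝ) t ⊆ Icc (0:ℝ) T := Icc_subset_Icc le_rfl ht.2
  filter_upwards [ae_restrict_of_ae_restrict_of_subset hsub hf_bds,
    ae_restrict_mem measurableSet_Icc] with u hu hmem
  have h1 : Real.exp (-(t - u) / τ) ≤ 1 := by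
    rw [Real.exp_le_one_iff]
    apply div_nonpos_of_nonpos_of_nonneg <;> linarith [hmem.2]
  rw [Real.norm_eq_abs, abs_mul, abs_of_nonneg (Real.exp_nonneg _), abs_of_nonneg hu.1]
  calc Real.exp (-(t - u) / τ) * f u ≤ 1 * fmax :=
        mul_le_mul h1 hu.2 hu.1 zero_le_one
    _ = fmax := one_mul _

lemma aux_Vub (hT : 0 < T) (hτ : 0 < τ) (hfmax : 0 < fmax) (hf_meas : Measurable f)
    (hf_bds : ∀ᵐ t ∂(volume.restrict (Icc (0:ℝ) T)), 0 ≤ f t ∧ f t ≤ fmax) :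
    ∀ t ∈ Icc (0:ℝ) T, runnerV τ f t ≤ τ * fmax := by
  intro t ht
  have hint1 : IntervalIntegrable (fun u => Real.exp (-(t - u) / τ) * f u) volume 0 t :=
    ((aux_ker_int hT hτ hfmax hf_meas hf_bds t ht).mono_set
      (by rw [uIcc_of_le ht.1])).intervalIntegrable
  have hc : Continuous fun u : ℝ => Real.exp (-(t - u) / τ) := by fun_prop
  have hint2 : IntervalIntegrable (fun u => Real.exp (-(t - u) / τ) * fmax) volume 0 t :=
    (hc.mul continuous_const).intervalIntegrable 0 t
  have hmono : runnerV τ f t ≤ ∫ u in (0:ℝ)..t, Real.exp (-(t - u) / τ) * fmax := by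
    apply intervalIntegral.integral_mono_ae_restrict ht.1 hint1 hint2
    have hsub : Icc (0:ℝ) t ⊆ Icc (0:ℝ) T := Icc_subset_Icc le_rfl ht.2
    filter_upwards [ae_restrict_of_ae_restrict_of_subset hsub hf_bds] with u hu
    exact mul_le_mul_of_nonneg_left hu.2 (Real.exp_nonneg _)
  have hderiv : ∀ u ∈ uIcc (0:ℝ) t,
      HasDerivAt (fun u => τ * Real.exp ((u - t) / τ)) (Real.exp (-(t - u) / τ)) u := by
    intro u _
    have h1 : HasDerivAt (fun u : ℝ => (u - t) / τ) (1 / τ) u := by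
      simpa using ((hasDerivAt_id u).sub_const t).div_const τ
    have h2 := (h1.exp).const_mul τ
    refine h2.congr_deriv ?_
    rw [show -(t - u) / τ = (u - t) / τ by ring]
    field_simp
  have hcont : IntervalIntegrable (fun u => Real.exp (-(t - u) / τ)) volume 0 t :=
    hc.intervalIntegrable 0 t
  have hval : ∫ u in (0:ℝ)..t, Real.exp (-(t - u) / τ)
      = τ * Real.exp ((t - t) / τ) - τ * Real.exp ((0 - t) / τ) :=
    intervalIntegral.integral_eq_sub_of_hasDerivAt hderiv hcont
  have hval2 : ∫ u in (0:ℝ)..t, Real.exp (-(t - u) / τ) * fmax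
      = (τ * Real.exp ((t - t) / τ) - τ * Real.exp ((0 - t) / τ)) * fmax := by
    rw [intervalIntegral.integral_mul_const, hval]
  rw [hval2] at hmono
  have h3 : Real.exp ((t - t) / τ) = 1 := by norm_num
  have h4 : 0 ≤ Real.exp ((0 - t) / τ) := Real.exp_nonneg _
  calc runnerV τ f t ≤ (τ * Real.exp ((t - t) / τ) - τ * Real.exp ((0 - t) / τ)) * fmax :=
        hmono
    _ ≤ τ * fmax := by rw [h3]; nlinarith [mul_nonneg (mul_nonneg hτ.le h4) hfmax.le]

lemma aux_Vcont (hT : 0 < T) (hτ : 0 < τ) (hfmax : 0 < fmax) (hf_meas : Measurable f)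
    (hf_bds : ∀ᵐ t ∂(volume.restrict (Icc (0:ℝ) T)), 0 ≤ f t ∧ f t ≤ fmax) :
    ContinuousOn (runnerV τ f) (Icc (0:ℝ) T) := by
  have hVrw : ∀ t : ℝ, runnerV τ f t
      = Real.exp (-t / τ) * ∫ u in (0:ℝ)..t, Real.exp (u / τ) * f u := by
    intro t
    rw [← intervalIntegral.integral_const_mul]
    apply intervalIntegral.integral_congr
    intro u _
    show Real.exp (-(t - u) / τ) * f u = Real.exp (-t / τ) * (Real.exp (u / τ) * f u)
    rw [← mul_assoc, ← Real.exp_add]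
    congr 2
    field_simp
    ring
  have hEfi : IntegrableOn (fun u => Real.exp (u / τ) * f u) (Icc (0:ℝ) T) volume := by
    have hm : Measurable (fun u : ℝ => Real.exp (u / τ)) :=
      Real.measurable_exp.comp (measurable_id.div_const τ)
    refine Integrable.mono' (integrable_const (Real.exp (T / τ) * fmax))
      ((hm.mul hf_meas).aestronglyMeasurable) ?_
    filter_upwards [hf_bds, ae_restrict_mem measurableSet_Icc] with u hu hmem
    rw [Real.norm_eq_abs, abs_mul, abs_of_nonneg (Real.exp_nonneg _), abs_of_nonneg hu.1]
    exact mul_le_mul (Real.exp_le_exp.2 (by gcongr; exact hmem.2)) hu.2 hu.1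
      (Real.exp_nonneg _)
  have h1 : ContinuousOn (fun t => Real.exp (-t / τ) * ∫ u in (0:ℝ)..t,
      Real.exp (u / τ) * f u) (Icc (0:ℝ) T) := by
    apply ContinuousOn.mul
    · exact (Real.continuous_exp.comp ((continuous_id.neg).div_const τ)).continuousOn
    · have := intervalIntegral.continuousOn_primitive_interval
        (f := fun u => Real.exp (u / τ) * f u) (a := (0:ℝ)) (b := T) (μ := volume)
        (by rwa [uIcc_of_le hT.le])
      rwa [uIcc_of_le hT.le] at this
  exact h1.congr fun t _ => hVrw t

end Aux

theorem fat_energy_never_tight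
    (T τ fmax a EF0 : ℝ) (hT : 0 < T) (hτ : 0 < τ) (hfmax : 0 < fmax)
    (ha : 0 < a) (hEF0 : 0 ≤ EF0)
    (glyc : ℝ → ℝ) (hglyc_cont : Continuous glyc)
    (hglyc_bds : ∀ v, 0 ≤ glyc v ∧ glyc v ≤ 1)
    (f : ℝ → ℝ) (hf_meas : Measurable f)
    (hf_bds : ∀ᵐ t ∂(volume.restrict (Icc (0:ℝ) T)), 0 ≤ f t ∧ f t ≤ fmax) :
    AntitoneOn (runnerEF τ a EF0 glyc f) (Icc (0:ℝ) T) ∧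
    (∀ t ∈ Icc (0:ℝ) T, EF0 - a * τ * fmax ^ 2 * t ≤ runnerEF τ a EF0 glyc f t) ∧
    (a * τ * fmax ^ 2 * T < EF0 → ∀ t ∈ Icc (0:ℝ) T, 0 < runnerEF τ a EF0 glyc f t) := by
  have hVnn := aux_Vnn hT hτ hfmax hf_bds
  have hVub := aux_Vub hT hτ hfmax hf_meas hf_bds
  have hVcont := aux_Vcont hT hτ hfmax hf_meas hf_bds
  set g : ℝ → ℝ := fun u => f u * runnerV τ f u * (1 - glyc (runnerV τ f u)) with hgdef
  have hEF : ∀ t, runnerEF τ a EF0 glyc f t = EF0 - a * ∫ u in (0:ℝ)..t, g u := fun t => rfl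
  have hgbd : ∀ᵐ u ∂(volume.restrict (Icc (0:ℝ) T)), 0 ≤ g u ∧ g u ≤ τ * fmax ^ 2 := by
    filter_upwards [hf_bds, ae_restrict_mem measurableSet_Icc] with u hfu hmem
    have hV0 := hVnn u hmem
    have hV1 := hVub u hmem
    obtain ⟨hg0, hg1⟩ := hglyc_bds (runnerV τ f u)
    constructor
    · exact mul_nonneg (mul_nonneg hfu.1 hV0) (by linarith)
    · calc f u * runnerV τ f u * (1 - glyc (runnerV τ f u))
        ≤ f u * runnerV τ f u * 1 := by
            apply mul_le_mul_of_nonneg_left (by linarith) (mul_nonneg hfu.1 hV0)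
        _ = f u * runnerV τ f u := mul_one _
        _ ≤ fmax * (τ * fmax) := mul_le_mul hfu.2 hV1 hV0 hfmax.le
        _ = τ * fmax ^ 2 := by ring
  have hg_meas : AEStronglyMeasurable g (volume.restrict (Icc (0:ℝ) T)) := by
    have hφ : ContinuousOn (fun u => runnerV τ f u * (1 - glyc (runnerV τ f u)))
        (Icc (0:ℝ) T) :=
      hVcont.mul (continuousOn_const.sub (hglyc_cont.comp_continuousOn hVcont))
    have h1 := hf_meas.aestronglyMeasurable (μ := volume.restrict (Icc (0:ℝ) T))
    have h2 := h1.mul (hφ.aestronglyMeasurable measurableSet_Icc)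
    apply h2.congr
    filter_upwards with u
    show f u * (runnerV τ f u * (1 - glyc (runnerV τ f u))) = g u
    rw [hgdef]; ring
  have hgi : IntegrableOn g (Icc (0:ℝ) T) volume := by
    refine Integrable.mono' (integrable_const (τ * fmax ^ 2)) hg_meas ?_
    filter_upwards [hgbd] with u hu
    rw [Real.norm_eq_abs, abs_of_nonneg hu.1]
    exact hu.2
  have hgii : ∀ s t : ℝ, 0 ≤ s → s ≤ t → t ≤ T → IntervalIntegrable g volume s t := by
    intro s t hs hst htT
    exact (hgi.mono_set (by rw [uIcc_of_le hst]; exact Icc_subset_Icc hs htT)).intervalIntegrable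
  have hmono_int : ∀ s t : ℝ, 0 ≤ s → s ≤ t → t ≤ T →
      (∫ u in (0:ℝ)..s, g u) ≤ ∫ u in (0:ℝ)..t, g u := by
    intro s t hs hst htT
    have h1 := hgii 0 s le_rfl hs (hst.trans htT)
    have h2 := hgii s t hs hst htT
    rw [← intervalIntegral.integral_add_adjacent_intervals h1 h2]
    have h3 : 0 ≤ ∫ u in s..t, g u := by
      apply intervalIntegral.integral_nonneg_of_ae_restrict hst
      have hsub : Icc s t ⊆ Icc (0:ℝ) T := Icc_subset_Icc hs htT
      filter_upwards [ae_restrict_of_ae_restrict_of_subset hsub hgbd] with u hu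
      exact hu.1
    linarith
  have part2 : ∀ t ∈ Icc (0:ℝ) T, EF0 - a * τ * fmax ^ 2 * t ≤ runnerEF τ a EF0 glyc f t := by
    intro t ht
    rw [hEF]
    have hub : (∫ u in (0:ℝ)..t, g u) ≤ τ * fmax ^ 2 * t := by
      have h1 := hgii 0 t le_rfl ht.1 ht.2
      have h2 : IntervalIntegrable (fun _ : ℝ => τ * fmax ^ 2) volume 0 t :=
        intervalIntegrable_const
      have h3 : (∫ u in (0:ℝ)..t, g u) ≤ ∫ _u in (0:ℝ)..t, τ * fmax ^ 2 := by
        apply intervalIntegral.integral_mono_ae_restrict ht.1 h1 h2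
        have hsub : Icc (0:ℝ) t ⊆ Icc (0:ℝ) T := Icc_subset_Icc le_rfl ht.2
        filter_upwards [ae_restrict_of_ae_restrict_of_subset hsub hgbd] with u hu
        exact hu.2
      rw [intervalIntegral.integral_const, smul_eq_mul] at h3
      calc (∫ u in (0:ℝ)..t, g u) ≤ (t - 0) * (τ * fmax ^ 2) := h3
        _ = τ * fmax ^ 2 * t := by ring
    nlinarith
  refine ⟨?_, part2, ?_⟩
  · intro s hs t ht hst
    rw [hEF, hEF]
    have := hmono_int s t hs.1 hst ht.2
    nlinarith
  · intro hbig t ht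
    have h1 := part2 t ht
    have h2 : a * τ * fmax ^ 2 * t ≤ a * τ * fmax ^ 2 * T := by
      apply mul_le_mul_of_nonneg_left ht.2
      positivity
    linarith
end

section
/- Let T > 0, τ > 0, f_max > 0. Let (fⁿ) be a sequence of measurable functions on [0,T] with 0 ≤ fⁿ(t) ≤ f_max a.e. for all n, and suppose fⁿ converges weakly in L²(0,T) to f* (i.e., ∫₀^T fⁿ g → ∫₀^T f* g for all g ∈ L²(0,T)). Then the corresponding velocities converge uniformly: sup_{t ∈ [0,T]} |V[fⁿ](t) - V[f*](t)| → 0 as n → ∞. -/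
open MeasureTheory Real Set Filter
open scoped Interval

/-- Representation of `runnerV` as integral against an indicator kernel over `[0,T]`. -/
lemma runnerV_rep (T τ : ℝ) (f : ℝ → ℝ) (t : ℝ) (ht : t ∈ Icc (0:ℝ) T) :
    ∫ u in (0:ℝ)..T, f u * (Ioc (0:ℝ) t).indicator (fun u => Real.exp (-(t - u) / τ)) u
      = runnerV τ f t := by
  have h0T : (0:ℝ) ≤ T := ht.1.trans ht.2
  rw [intervalIntegral.integral_of_le h0T, runnerV, intervalIntegral.integral_of_le ht.1]
  have hfun : ∀ u, f u * (Ioc (0:ℝ) t).indicator (fun u => Real.exp (-(t - u) / τ)) u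
      = (Ioc (0:ℝ) t).indicator (fun u => Real.exp (-(t - u) / τ) * f u) u := by
    intro u
    by_cases h : u ∈ Ioc (0:ℝ) t <;> simp [Set.indicator, h, mul_comm]
  simp_rw [hfun]
  rw [MeasureTheory.integral_indicator measurableSet_Ioc,
    Measure.restrict_restrict measurableSet_Ioc,
    Set.inter_eq_self_of_subset_left (Set.Ioc_subset_Ioc_right ht.2)]

/-- Integrability of a continuous kernel times a bounded measurable function. -/
lemma kernel_mul_intervalIntegrable (T fmax K : ℝ) (f k : ℝ → ℝ)
    (hf : Measurable f) (hk : Continuous k)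
    (hbd : ∀ᵐ u ∂(volume.restrict (Icc (0:ℝ) T)), 0 ≤ f u ∧ f u ≤ fmax)
    (hK : ∀ u ∈ Icc (0:ℝ) T, |k u| ≤ K)
    (a b : ℝ) (hab : Ι a b ⊆ Icc (0:ℝ) T) :
    IntervalIntegrable (fun u => k u * f u) volume a b := by
  rw [intervalIntegrable_iff]
  have hmeas : AEStronglyMeasurable (fun u => k u * f u) (volume.restrict (Ι a b)) :=
    (hk.measurable.mul hf).aestronglyMeasurable
  have hconst : IntegrableOn (fun _ : ℝ => K * fmax) (Ι a b) volume := by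
    refine (integrableOn_const_iff enorm_ne_top).mpr (Or.inr ?_)
    rw [Set.uIoc]
    exact measure_Ioc_lt_top
  refine Integrable.mono' hconst hmeas ?_
  have hbd' := ae_restrict_of_ae_restrict_of_subset hab hbd
  have hmem := ae_restrict_mem (μ := volume) (s := Ι a b) measurableSet_uIoc
  filter_upwards [hbd', hmem] with u hu hmemu
  have hKu := hK u (hab hmemu)
  rw [Real.norm_eq_abs, abs_mul]
  have hfu : |f u| ≤ fmax := by rw [abs_of_nonneg hu.1]; exact hu.2
  exact mul_le_mul hKu hfu (abs_nonneg _) ((abs_nonneg (k u)).trans hKu)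

/-- Lipschitz-type estimate for the difference of exponential kernels. -/
lemma ker_diff (τ u s t : ℝ) (hτ : 0 < τ) (hu : 0 ≤ u) (hus : u ≤ s) (hst : s ≤ t) :
    |Real.exp (-(t - u) / τ) - Real.exp (-(s - u) / τ)| ≤ (t - s) / τ := by
  set a := -(t - u) / τ with ha_def
  set b := -(s - u) / τ with hb_def
  have hab : a ≤ b := by
    rw [ha_def, hb_def]
    exact (div_le_div_iff_of_pos_right hτ).mpr (by linarith)
  have hb0 : b ≤ 0 := by
    rw [hb_def]
    apply div_nonpos_of_nonpos_of_nonneg <;> linarith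
  have hba : b - a = (t - s) / τ := by
    rw [ha_def, hb_def, div_sub_div_same]
    congr 1
    ring
  have hexple : Real.exp a ≤ Real.exp b := Real.exp_le_exp.mpr hab
  rw [abs_of_nonpos (by linarith)]
  have h1 : (a - b) + 1 ≤ Real.exp (a - b) := Real.add_one_le_exp _
  have h2 : Real.exp b ≤ 1 := Real.exp_le_one_iff.mpr hb0
  have h3 : Real.exp a = Real.exp b * Real.exp (a - b) := by
    rw [← Real.exp_add]; ring_nf
  have hbpos : 0 < Real.exp b := Real.exp_pos b
  have key : Real.exp b - Real.exp a ≤ b - a := by nlinarith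
  linarith [key, hba.ge, hba.le]

/-- Equi-Lipschitz estimate for the velocities (ordered version). -/
lemma runnerV_lipschitz (T τ fmax : ℝ) (hτ : 0 < τ) (hfmax : 0 < fmax)
    (f : ℝ → ℝ) (hf : Measurable f)
    (hbd : ∀ᵐ u ∂(volume.restrict (Icc (0:ℝ) T)), 0 ≤ f u ∧ f u ≤ fmax)
    (s t : ℝ) (hs : s ∈ Icc (0:ℝ) T) (ht : t ∈ Icc (0:ℝ) T) (hst : s ≤ t) :
    |runnerV τ f t - runnerV τ f s| ≤ (fmax * (1 + T / τ)) * (t - s) := by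
  have hT0 : (0:ℝ) ≤ T := hs.1.trans hs.2
  have hsub0s : Ι (0:ℝ) s ⊆ Icc (0:ℝ) T := by
    rw [Set.uIoc_of_le hs.1]
    exact fun u hu => ⟨hu.1.le, hu.2.trans hs.2⟩
  have hsubst : Ι s t ⊆ Icc (0:ℝ) T := by
    rw [Set.uIoc_of_le hst]
    exact fun u hu => ⟨hs.1.trans hu.1.le, hu.2.trans ht.2⟩
  -- kernels are bounded by 1 on relevant intervals
  have hkert : ∀ r : ℝ, r ∈ Icc (0:ℝ) T → ∀ u ∈ Icc (0:ℝ) T,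
      |Real.exp (-(r - u) / τ)| ≤ Real.exp (T / τ) := by
    intro r hr u hu
    rw [Real.abs_exp, Real.exp_le_exp]
    have hle : -(r - u) ≤ T := by
      have := hu.2; have := hr.1; linarith
    exact (div_le_div_iff_of_pos_right hτ).mpr hle
  have hint_t_0s : IntervalIntegrable (fun u => Real.exp (-(t - u) / τ) * f u) volume 0 s :=
    kernel_mul_intervalIntegrable T fmax (Real.exp (T / τ)) f _ hf
      (Real.continuous_exp.comp (by continuity)) hbd (hkert t ht) 0 s hsub0s
  have hint_t_st : IntervalIntegrable (fun u => Real.exp (-(t - u) / τ) * f u) volume s t :=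
    kernel_mul_intervalIntegrable T fmax (Real.exp (T / τ)) f _ hf
      (Real.continuous_exp.comp (by continuity)) hbd (hkert t ht) s t hsubst
  have hint_s_0s : IntervalIntegrable (fun u => Real.exp (-(s - u) / τ) * f u) volume 0 s :=
    kernel_mul_intervalIntegrable T fmax (Real.exp (T / τ)) f _ hf
      (Real.continuous_exp.comp (by continuity)) hbd (hkert s hs) 0 s hsub0s
  -- split the integral
  have hsplit : runnerV τ f t
      = (∫ u in (0:ℝ)..s, Real.exp (-(t - u) / τ) * f u)
        + ∫ u in s..t, Real.exp (-(t - u) / τ) * f u := by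
    rw [runnerV, ← intervalIntegral.integral_add_adjacent_intervals hint_t_0s hint_t_st]
  have hdiff : runnerV τ f t - runnerV τ f s
      = (∫ u in (0:ℝ)..s,
          (Real.exp (-(t - u) / τ) - Real.exp (-(s - u) / τ)) * f u)
        + ∫ u in s..t, Real.exp (-(t - u) / τ) * f u := by
    rw [hsplit, runnerV]
    have := intervalIntegral.integral_sub hint_t_0s hint_s_0s
    simp_rw [sub_mul]
    rw [this]
    ring
  -- bound the two pieces
  have hmem0s := ae_restrict_mem (μ := volume) (s := Ι (0:ℝ) s) measurableSet_uIoc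
  have hbd0s := ae_restrict_of_ae_restrict_of_subset hsub0s hbd
  have hmemst := ae_restrict_mem (μ := volume) (s := Ι s t) measurableSet_uIoc
  have hbdst := ae_restrict_of_ae_restrict_of_subset hsubst hbd
  have hb1ae : ∀ᵐ u ∂(volume.restrict (Ι s t)),
      ‖Real.exp (-(t - u) / τ) * f u‖ ≤ (fun _ : ℝ => fmax) u := by
    filter_upwards [hbdst, hmemst] with u hu hmemu
    rw [Set.uIoc_of_le hst] at hmemu
    rw [Real.norm_eq_abs, abs_mul, Real.abs_exp, abs_of_nonneg hu.1]
    have he : Real.exp (-(t - u) / τ) ≤ 1 := by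
      rw [Real.exp_le_one_iff]
      apply div_nonpos_of_nonpos_of_nonneg _ hτ.le
      linarith [hmemu.2]
    nlinarith [Real.exp_pos (-(t - u) / τ), hu.2]
  have hbound1 : ‖∫ u in s..t, Real.exp (-(t - u) / τ) * f u‖ ≤ fmax * (t - s) := by
    have h := intervalIntegral.norm_integral_le_abs_of_norm_le hb1ae intervalIntegrable_const
    rw [intervalIntegral.integral_const, smul_eq_mul,
      abs_of_nonneg (by nlinarith)] at h
    linarith [h]
  have hb2ae : ∀ᵐ u ∂(volume.restrict (Ι (0:ℝ) s)),
      ‖(Real.exp (-(t - u) / τ) - Real.exp (-(s - u) / τ)) * f u‖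
        ≤ (fun _ : ℝ => (t - s) / τ * fmax) u := by
    filter_upwards [hbd0s, hmem0s] with u hu hmemu
    rw [Set.uIoc_of_le hs.1] at hmemu
    rw [Real.norm_eq_abs, abs_mul, abs_of_nonneg hu.1]
    have hker := ker_diff τ u s t hτ hmemu.1.le hmemu.2 hst
    have hts : (0:ℝ) ≤ (t - s) / τ := div_nonneg (by linarith) hτ.le
    nlinarith [abs_nonneg (Real.exp (-(t - u) / τ) - Real.exp (-(s - u) / τ)), hu.2]
  have hbound2 : ‖∫ u in (0:ℝ)..s,
      (Real.exp (-(t - u) / τ) - Real.exp (-(s - u) / τ)) * f u‖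
      ≤ ((t - s) / τ * fmax) * s := by
    have h := intervalIntegral.norm_integral_le_abs_of_norm_le hb2ae intervalIntegrable_const
    rw [intervalIntegral.integral_const, smul_eq_mul, sub_zero] at h
    have habs : |s * ((t - s) / τ * fmax)| = ((t - s) / τ * fmax) * s := by
      have hts : (0:ℝ) ≤ (t - s) / τ := div_nonneg (by linarith) hτ.le
      have hs0 : (0:ℝ) ≤ s := hs.1
      rw [abs_of_nonneg (by positivity)]
      ring
    rw [habs] at h
    exact h
  rw [hdiff]
  have htri := norm_add_le (∫ u in (0:ℝ)..s,
      (Real.exp (-(t - u) / τ) - Real.exp (-(s - u) / τ)) * f u)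
    (∫ u in s..t, Real.exp (-(t - u) / τ) * f u)
  rw [Real.norm_eq_abs] at htri
  have hsT : s ≤ T := hs.2
  have : ((t - s) / τ * fmax) * s ≤ ((t - s) / τ * fmax) * T := by
    have hts : (0:ℝ) ≤ (t - s) / τ := div_nonneg (by linarith) hτ.le
    have : (0:ℝ) ≤ (t - s) / τ * fmax := by positivity
    nlinarith
  calc |(∫ u in (0:ℝ)..s,
      (Real.exp (-(t - u) / τ) - Real.exp (-(s - u) / τ)) * f u)
        + ∫ u in s..t, Real.exp (-(t - u) / τ) * f u|
      ≤ ((t - s) / τ * fmax) * s + fmax * (t - s) := by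
        simp only [Real.norm_eq_abs] at htri hbound1 hbound2
        linarith [htri, hbound1, hbound2]
    _ ≤ ((t - s) / τ * fmax) * T + fmax * (t - s) := by linarith
    _ = (fmax * (1 + T / τ)) * (t - s) := by field_simp; ring

theorem velocities_converge_uniformly_of_weak_convergence
    (T τ fmax : ℝ) (hT : 0 < T) (hτ : 0 < τ) (hfmax : 0 < fmax)
    (fn : ℕ → ℝ → ℝ) (fstar : ℝ → ℝ)
    (hfn_meas : ∀ n, Measurable (fn n))
    (hfn_bds : ∀ n, ∀ᵐ t ∂(volume.restrict (Icc (0:ℝ) T)), 0 ≤ fn n t ∧ fn n t ≤ fmax)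
    (hweak : ∀ g : ℝ → ℝ, MemLp g 2 (volume.restrict (Icc (0:ℝ) T)) →
      Tendsto (fun n => ∫ u in (0:ℝ)..T, fn n u * g u) atTop
        (nhds (∫ u in (0:ℝ)..T, fstar u * g u))) :
    TendstoUniformlyOn (fun n t => runnerV τ (fn n) t) (runnerV τ fstar) atTop
      (Icc (0:ℝ) T) := by
  haveI : IsFiniteMeasure (volume.restrict (Icc (0:ℝ) T)) := by
    constructor
    rw [Measure.restrict_apply_univ]
    exact measure_Icc_lt_top
  set C : ℝ := fmax * (1 + T / τ) with hC_def
  have hC : 0 < C := by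
    have : (0:ℝ) < 1 + T / τ := by positivity
    positivity
  -- pointwise convergence
  have hptwise : ∀ t ∈ Icc (0:ℝ) T,
      Tendsto (fun n => runnerV τ (fn n) t) atTop (nhds (runnerV τ fstar t)) := by
    intro t ht
    set g : ℝ → ℝ := (Ioc (0:ℝ) t).indicator (fun u => Real.exp (-(t - u) / τ)) with hg_def
    have hg : MemLp g 2 (volume.restrict (Icc (0:ℝ) T)) := by
      refine MemLp.of_bound ?_ 1 ?_
      · exact ((Measurable.indicator
          (Real.continuous_exp.comp (by continuity)).measurable
          measurableSet_Ioc).aestronglyMeasurable)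
      · refine Eventually.of_forall fun u => ?_
        rw [hg_def, Real.norm_eq_abs]
        by_cases h : u ∈ Ioc (0:ℝ) t
        · rw [Set.indicator_of_mem h, Real.abs_exp, Real.exp_le_one_iff]
          apply div_nonpos_of_nonpos_of_nonneg _ hτ.le
          linarith [h.2]
        · rw [Set.indicator_of_notMem h]; norm_num
    have h := hweak g hg
    have heq1 : (fun n => ∫ u in (0:ℝ)..T, fn n u * g u)
        = fun n => runnerV τ (fn n) t :=
      funext fun n => runnerV_rep T τ (fn n) t ht
    have heq2 : (∫ u in (0:ℝ)..T, fstar u * g u) = runnerV τ fstar t :=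
      runnerV_rep T τ fstar t ht
    rwa [heq1, heq2] at h
  -- equi-Lipschitz bounds
  have hlip : ∀ n, ∀ s ∈ Icc (0:ℝ) T, ∀ t ∈ Icc (0:ℝ) T,
      |runnerV τ (fn n) t - runnerV τ (fn n) s| ≤ C * |t - s| := by
    intro n s hs t ht
    rcases le_total s t with h | h
    · rw [abs_of_nonneg (by linarith : (0:ℝ) ≤ t - s)]
      exact runnerV_lipschitz T τ fmax hτ hfmax (fn n) (hfn_meas n) (hfn_bds n) s t hs ht h
    · rw [abs_sub_comm, abs_sub_comm t s,
        abs_of_nonneg (by linarith : (0:ℝ) ≤ s - t)]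
      exact runnerV_lipschitz T τ fmax hτ hfmax (fn n) (hfn_meas n) (hfn_bds n) t s ht hs h
  have hlipstar : ∀ s ∈ Icc (0:ℝ) T, ∀ t ∈ Icc (0:ℝ) T,
      |runnerV τ fstar t - runnerV τ fstar s| ≤ C * |t - s| := by
    intro s hs t ht
    have htend : Tendsto (fun n => |runnerV τ (fn n) t - runnerV τ (fn n) s|) atTop
        (nhds |runnerV τ fstar t - runnerV τ fstar s|) :=
      ((hptwise t ht).sub (hptwise s hs)).abs
    exact le_of_tendsto htend (Eventually.of_forall fun n => hlip n s hs t ht)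
  -- uniform convergence via finite net
  rw [Metric.tendstoUniformlyOn_iff]
  intro ε hε
  set δ : ℝ := ε / (3 * (C + 1)) with hδ_def
  have hδ : 0 < δ := by positivity
  have hCδ : C * δ ≤ ε / 3 := by
    have h1 : C * δ = (C * ε) / (3 * (C + 1)) := by rw [hδ_def]; ring
    rw [h1, div_le_div_iff₀ (by positivity) (by norm_num)]
    nlinarith
  -- finite subcover
  have hcover : Icc (0:ℝ) T ⊆ ⋃ i : Icc (0:ℝ) T, Metric.ball (i : ℝ) δ := by
    intro x hx
    exact Set.mem_iUnion.mpr ⟨⟨x, hx⟩, Metric.mem_ball_self hδ⟩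
  obtain ⟨I, hI⟩ := isCompact_Icc.elim_finite_subcover
    (fun i : Icc (0:ℝ) T => Metric.ball (i : ℝ) δ) (fun _ => Metric.isOpen_ball) hcover
  have hev : ∀ᶠ n in atTop, ∀ i ∈ I,
      |runnerV τ (fn n) (i : ℝ) - runnerV τ fstar (i : ℝ)| < ε / 3 := by
    rw [Filter.eventually_all_finset]
    intro i _
    have := hptwise (i : ℝ) i.2
    rw [Metric.tendsto_nhds] at this
    filter_upwards [this (ε / 3) (by positivity)] with n hn
    rw [Real.dist_eq] at hn
    exact hn
  filter_upwards [hev] with n hn t ht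
  obtain ⟨i, hiI, hit⟩ : ∃ i ∈ I, t ∈ Metric.ball (i : ℝ) δ := by
    have := hI ht
    simpa using this
  have hti : |t - (i : ℝ)| < δ := by
    rw [Metric.mem_ball, Real.dist_eq] at hit
    exact hit
  have h1 : |runnerV τ fstar t - runnerV τ fstar (i : ℝ)| ≤ C * δ := by
    calc |runnerV τ fstar t - runnerV τ fstar (i : ℝ)|
        ≤ C * |t - (i : ℝ)| := hlipstar (i : ℝ) i.2 t ht
      _ ≤ C * δ := by nlinarith [abs_nonneg (t - (i : ℝ))]
  have h2 : |runnerV τ (fn n) (i : ℝ) - runnerV τ (fn n) t| ≤ C * δ := by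
    calc |runnerV τ (fn n) (i : ℝ) - runnerV τ (fn n) t|
        = |runnerV τ (fn n) t - runnerV τ (fn n) (i : ℝ)| := abs_sub_comm _ _
      _ ≤ C * |t - (i : ℝ)| := hlip n (i : ℝ) i.2 t ht
      _ ≤ C * δ := by nlinarith [abs_nonneg (t - (i : ℝ))]
  have h3 : |runnerV τ fstar (i : ℝ) - runnerV τ (fn n) (i : ℝ)| < ε / 3 := by
    rw [abs_sub_comm]
    exact hn i hiI
  rw [Real.dist_eq]
  have htri1 : |runnerV τ fstar t - runnerV τ (fn n) t|
      ≤ |runnerV τ fstar t - runnerV τ fstar (i : ℝ)|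
        + |runnerV τ fstar (i : ℝ) - runnerV τ (fn n) t| := abs_sub_le _ _ _
  have htri2 : |runnerV τ fstar (i : ℝ) - runnerV τ (fn n) t|
      ≤ |runnerV τ fstar (i : ℝ) - runnerV τ (fn n) (i : ℝ)|
        + |runnerV τ (fn n) (i : ℝ) - runnerV τ (fn n) t| := abs_sub_le _ _ _
  linarith
end

section
/- Let T > 0, f_max > 0, and let g : ℝ → ℝ be continuous. Let (fⁿ) be measurable functions on [0,T] with 0 ≤ fⁿ ≤ f_max a.e. converging weakly in L²(0,T) to f*, and let Vⁿ, V* : [0,T] → ℝ be continuous functions with Vⁿ → V* uniformly on [0,T]. Then for every t ∈ [0,T], ∫₀ᵗ fⁿ(u) g(Vⁿ(u)) du → ∫₀ᵗ f*(u) g(V*(u)) du as n → ∞. (Applied with g(v) = v(1 - glyc(v)) and g(v) = v·glyc(v), this shows the limiting fat and glycogen energy states correspond to the weak limit control f*.) -/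
open MeasureTheory Real Set Filter
open scoped Interval

/-- Auxiliary: truncating an interval integral via an indicator. -/
lemma indicator_interval_integral (F φ : ℝ → ℝ) {t T : ℝ} (ht0 : 0 ≤ t) (htT : t ≤ T) :
    ∫ u in (0:ℝ)..T, F u * (Ioc (0:ℝ) t).indicator φ u = ∫ u in (0:ℝ)..t, F u * φ u := by
  rw [intervalIntegral.integral_of_le (ht0.trans htT), intervalIntegral.integral_of_le ht0]
  have h1 : ∀ u, F u * (Ioc (0:ℝ) t).indicator φ u
      = (Ioc (0:ℝ) t).indicator (fun v => F v * φ v) u := by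
    intro u; rw [Set.indicator_mul_right]
  simp_rw [h1]
  rw [integral_indicator measurableSet_Ioc, Measure.restrict_restrict measurableSet_Ioc,
    inter_eq_self_of_subset_left (Ioc_subset_Ioc le_rfl htT)]

theorem energy_integrals_converge
    (T fmax : ℝ) (hT : 0 < T) (hfmax : 0 < fmax)
    (g : ℝ → ℝ) (hg_cont : Continuous g)
    (fn : ℕ → ℝ → ℝ) (fstar : ℝ → ℝ)
    (hfn_meas : ∀ n, Measurable (fn n))
    (hfn_bds : ∀ n, ∀ᵐ t ∂(volume.restrict (Icc (0:ℝ) T)), 0 ≤ fn n t ∧ fn n t ≤ fmax)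
    (hweak : ∀ h : ℝ → ℝ, MemLp h 2 (volume.restrict (Icc (0:ℝ) T)) →
      Tendsto (fun n => ∫ u in (0:ℝ)..T, fn n u * h u) atTop
        (nhds (∫ u in (0:ℝ)..T, fstar u * h u)))
    (Vn : ℕ → ℝ → ℝ) (Vstar : ℝ → ℝ)
    (hVn_cont : ∀ n, Continuous (Vn n)) (hVstar_cont : Continuous Vstar)
    (hV_unif : TendstoUniformlyOn (fun n t => Vn n t) Vstar atTop (Icc (0:ℝ) T)) :
    ∀ t ∈ Icc (0:ℝ) T,
      Tendsto (fun n => ∫ u in (0:ℝ)..t, fn n u * g (Vn n u)) atTop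
        (nhds (∫ u in (0:ℝ)..t, fstar u * g (Vstar u))) := by
  intro t ht
  obtain ⟨ht0, htT⟩ := ht
  set φ : ℝ → ℝ := fun u => g (Vstar u) with hφ
  have hφ_cont : Continuous φ := hg_cont.comp hVstar_cont
  have hIoc_sub : Ioc (0:ℝ) t ⊆ Icc 0 T := fun u hu => ⟨hu.1.le, hu.2.trans htT⟩
  -- Step 1: the integral against fn of φ truncated to [0,t] converges (weak convergence)
  set h : ℝ → ℝ := (Ioc (0:ℝ) t).indicator φ with hh
  obtain ⟨C, hC⟩ := isCompact_Icc.exists_bound_of_continuousOn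
    (hφ_cont.continuousOn : ContinuousOn φ (Icc (0:ℝ) T))
  have hmem : MemLp h 2 (volume.restrict (Icc (0:ℝ) T)) := by
    refine MemLp.of_bound ((hφ_cont.measurable.indicator
      measurableSet_Ioc).aestronglyMeasurable) (max C 0) ?_
    refine Eventually.of_forall fun u => ?_
    by_cases hu : u ∈ Ioc (0:ℝ) t
    · rw [hh, Set.indicator_of_mem hu]
      exact le_max_of_le_left (hC u (hIoc_sub hu))
    · rw [hh, Set.indicator_of_notMem hu]
      simp
  have hB : Tendsto (fun n => ∫ u in (0:ℝ)..t, fn n u * φ u) atTop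
      (nhds (∫ u in (0:ℝ)..t, fstar u * φ u)) := by
    have := hweak h hmem
    rwa [hh, indicator_interval_integral fstar φ ht0 htT,
      show (fun n => ∫ u in (0:ℝ)..T, fn n u * (Ioc (0:ℝ) t).indicator φ u)
        = fun n => ∫ u in (0:ℝ)..t, fn n u * φ u from
        funext fun n => indicator_interval_integral (fn n) φ ht0 htT] at this
  -- Integrability facts
  have hint : ∀ (V : ℝ → ℝ), Continuous V → ∀ n,
      IntervalIntegrable (fun u => fn n u * g (V u)) volume 0 t := by
    intro V hV n
    rw [intervalIntegrable_iff]
    obtain ⟨D, hD⟩ := isCompact_Icc.exists_bound_of_continuousOn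
      ((hg_cont.comp hV).continuousOn : ContinuousOn (fun u => g (V u)) (Icc (0:ℝ) T))
    constructor
    · exact ((hfn_meas n).mul (hg_cont.comp hV).measurable).aestronglyMeasurable
    · haveI : IsFiniteMeasure (volume.restrict (Ι (0:ℝ) t)) :=
        ⟨by rw [Measure.restrict_apply_univ, uIoc_of_le ht0]; exact measure_Ioc_lt_top⟩
      refine HasFiniteIntegral.of_bounded (C := fmax * max D 0) ?_
      have hbd : ∀ᵐ u ∂(volume.restrict (Ι (0:ℝ) t)), 0 ≤ fn n u ∧ fn n u ≤ fmax := by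
        rw [uIoc_of_le ht0]
        exact ae_restrict_of_ae_restrict_of_subset hIoc_sub (hfn_bds n)
      have hmemIoc : ∀ᵐ u ∂(volume.restrict (Ι (0:ℝ) t)), u ∈ Ι (0:ℝ) t :=
        ae_restrict_mem (by rw [uIoc_of_le ht0]; exact measurableSet_Ioc)
      filter_upwards [hbd, hmemIoc] with u hu hu2
      have huT : u ∈ Icc (0:ℝ) T := by
        rw [uIoc_of_le ht0] at hu2; exact hIoc_sub hu2
      have h1 : ‖fn n u * g (V u)‖ = |fn n u| * ‖g (V u)‖ := by
        rw [Real.norm_eq_abs, abs_mul, Real.norm_eq_abs]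
      rw [h1, abs_of_nonneg hu.1]
      exact mul_le_mul hu.2 (le_max_of_le_left (hD u huT)) (norm_nonneg _)
        hfmax.le
  -- Step 2: the difference tends to 0
  have hA : Tendsto (fun n => (∫ u in (0:ℝ)..t, fn n u * g (Vn n u))
      - ∫ u in (0:ℝ)..t, fn n u * φ u) atTop (nhds 0) := by
    rw [NormedAddCommGroup.tendsto_nhds_zero]
    intro ε hε
    set ε' : ℝ := ε / (fmax * T + 1) with hε'
    have hden : 0 < fmax * T + 1 := by positivity
    have hε'pos : 0 < ε' := div_pos hε hden
    -- uniform continuity of g on a compact set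
    set K : Set ℝ := Vstar '' Icc 0 T with hK
    have hKc : IsCompact K := isCompact_Icc.image hVstar_cont
    set K' : Set ℝ := Metric.cthickening 1 K with hK'
    have hK'c : IsCompact K' := hKc.cthickening
    have hKK' : K ⊆ K' := Metric.self_subset_cthickening K
    have hg_uc : UniformContinuousOn g K' :=
      hK'c.uniformContinuousOn_of_continuous hg_cont.continuousOn
    rw [Metric.uniformContinuousOn_iff] at hg_uc
    obtain ⟨δ, hδpos, hδ⟩ := hg_uc ε' hε'pos
    have hunif := (Metric.tendstoUniformlyOn_iff.mp hV_unif) (min δ 1)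
      (lt_min hδpos one_pos)
    filter_upwards [hunif] with n hn
    -- pointwise bound on [0,t]
    have hpt : ∀ u ∈ Ι (0:ℝ) t, |g (Vn n u) - φ u| ≤ ε' := by
      intro u hu
      rw [uIoc_of_le ht0] at hu
      have huT : u ∈ Icc (0:ℝ) T := hIoc_sub hu
      have hd := hn u huT
      have hVsK : Vstar u ∈ K' := hKK' ⟨u, huT, rfl⟩
      have hVnK : Vn n u ∈ K' := by
        apply Metric.mem_cthickening_of_dist_le _ (Vstar u) 1 K ⟨u, huT, rfl⟩
        rw [dist_comm]
        exact (hd.le.trans (min_le_right _ _))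
      have := hδ (Vn n u) hVnK (Vstar u) hVsK
        (by rw [dist_comm]; exact hd.trans_le (min_le_left _ _))
      rw [Real.dist_eq] at this
      exact this.le
    -- assemble
    have hsub : (∫ u in (0:ℝ)..t, fn n u * g (Vn n u)) - ∫ u in (0:ℝ)..t, fn n u * φ u
        = ∫ u in (0:ℝ)..t, fn n u * g (Vn n u) - fn n u * φ u := by
      rw [intervalIntegral.integral_sub (hint (Vn n) (hVn_cont n) n)
        (hint Vstar hVstar_cont n)]
    rw [hsub]
    have hbd : ∀ᵐ u ∂(volume.restrict (Ι (0:ℝ) t)),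
        ‖fn n u * g (Vn n u) - fn n u * φ u‖ ≤ fmax * ε' := by
      have hbd0 : ∀ᵐ u ∂(volume.restrict (Ι (0:ℝ) t)), 0 ≤ fn n u ∧ fn n u ≤ fmax := by
        rw [uIoc_of_le ht0]
        exact ae_restrict_of_ae_restrict_of_subset hIoc_sub (hfn_bds n)
      have hmemIoc : ∀ᵐ u ∂(volume.restrict (Ι (0:ℝ) t)), u ∈ Ι (0:ℝ) t :=
        ae_restrict_mem (by rw [uIoc_of_le ht0]; exact measurableSet_Ioc)
      filter_upwards [hbd0, hmemIoc] with u hu hu2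
      have : fn n u * g (Vn n u) - fn n u * φ u = fn n u * (g (Vn n u) - φ u) := by ring
      rw [this, Real.norm_eq_abs, abs_mul, abs_of_nonneg hu.1]
      exact mul_le_mul hu.2 (hpt u hu2) (abs_nonneg _) hfmax.le
    have hle := intervalIntegral.norm_integral_le_abs_of_norm_le hbd
      (intervalIntegrable_const : IntervalIntegrable (fun _ => fmax * ε') volume 0 t)
    calc ‖∫ u in (0:ℝ)..t, fn n u * g (Vn n u) - fn n u * φ u‖
        ≤ |∫ _ in (0:ℝ)..t, fmax * ε'| := hle
      _ = fmax * ε' * t := by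
          rw [intervalIntegral.integral_const, smul_eq_mul, sub_zero, abs_of_nonneg
            (by positivity), mul_comm]
      _ ≤ fmax * ε' * T := by
          have : 0 ≤ fmax * ε' := by positivity
          nlinarith
      _ < ε := by
          rw [hε']
          rw [mul_comm fmax (ε / (fmax * T + 1)), mul_assoc, div_mul_eq_mul_div,
            div_lt_iff₀ hden]
          nlinarith
  -- Combine
  have hcomb : (fun n => ∫ u in (0:ℝ)..t, fn n u * g (Vn n u))
      = fun n => (∫ u in (0:ℝ)..t, fn n u * φ u)
        + ((∫ u in (0:ℝ)..t, fn n u * g (Vn n u)) - ∫ u in (0:ℝ)..t, fn n u * φ u) := by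
    funext n; ring
  rw [hcomb]
  have := hB.add hA
  rwa [add_zero] at this
end
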